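/- arXiv:2411.00250 — 3 statements merged into one kernel-verified Lean document; each statement's English description precedes it below -/
import Mathlib

section
/- For all integers d ≥ 1 and n ≥ d + 1, setting P_{n,d} := W_{n,d} · W_{n,d}ᵀ, one has P_{n,d}² = n · P_{n,d} and rank(P_{n,d}) = C(n−1, d). Consequently the eigenvalues of P_{n,d} are n with multiplicity C(n−1, d) and 0 with multiplicity C(n−1, d−1). -/
open Matrix Polynomial

/-- `S(G)`: real symmetric matrices whose off-diagonal zero/nonzero pattern
matches the adjacency of `G`; the diagonal is unconstrained. -/
def Sset {V : Type*} [Fintype V] [DecidableEq V] (G : SimpleGraph V) : Set (Matrix V V ℝ) :=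
  {M | M.IsSymm ∧ ∀ u v : V, u ≠ v → (M u v ≠ 0 ↔ G.Adj u v)}

/-- `q(G)`: the minimum number of distinct eigenvalues over matrices in `S(G)`. -/
noncomputable def minQ {V : Type*} [Fintype V] [DecidableEq V] (G : SimpleGraph V) : ℕ :=
  sInf {k : ℕ | ∃ M ∈ Sset G, (spectrum ℝ M).ncard = k}

/-- The Johnson graph `J(n,d)`: vertices are the `d`-element subsets of an `n`-set,
adjacent iff their symmetric difference has two elements. -/
def Johnson (n d : ℕ) : SimpleGraph {s : Finset (Fin n) // s.card = d} where
  Adj α β := (symmDiff α.1 β.1).card = 2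
  symm := ⟨by intro a b h; rwa [symmDiff_comm]⟩
  loopless := ⟨by intro a h; simp [symmDiff_self] at h⟩

/-- For `d`-subsets `α, β` with `α ∆ β = {i, j}`, `i < j`, this is
`h(α,β) = |{ℓ ∈ α ∩ β : i < ℓ < j}|`. -/
def hjExp {n : ℕ} (α β : Finset (Fin n)) : ℕ :=
  ((α ∩ β).filter (fun l => (∃ i ∈ symmDiff α β, i < l) ∧ ∃ j ∈ symmDiff α β, l < j)).card

/-- The signed adjacency matrix `A_{n,d}` of the Johnson graph `J(n,d)`:
`A(α,β) = (-1)^{h(α,β)}` when `|α ∆ β| = 2` and `0` otherwise. -/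
def Ajohnson (n d : ℕ) :
    Matrix {s : Finset (Fin n) // s.card = d} {s : Finset (Fin n) // s.card = d} ℝ :=
  fun α β => if (symmDiff α.1 β.1).card = 2 then (-1 : ℝ) ^ hjExp α.1 β.1 else 0

/-- The matrix `W_{n,d}`, rows indexed by `d`-subsets and columns by `(d+1)`-subsets of
an `n`-set: `W(α,β) = (-1)^{|{y ∈ β : y < x}|}` when `α ⊆ β` with `β \ α = {x}`, else `0`. -/
def Wj (n d : ℕ) :
    Matrix {s : Finset (Fin n) // s.card = d} {s : Finset (Fin n) // s.card = d + 1} ℝ :=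
  fun α β => if α.1 ⊆ β.1 then
      (-1 : ℝ) ^ ((β.1.filter (fun y => ∃ x ∈ β.1 \ α.1, y < x)).card)
    else 0

/-- `P_{n,d} := W_{n,d} · W_{n,d}ᵀ`. -/
noncomputable def Pj (n d : ℕ) := Wj n d * (Wj n d)ᵀ

section Aux
open Finset

variable {n : ℕ}

/-- Number of elements of `s` smaller than `x`. -/
def cnt (s : Finset (Fin n)) (x : Fin n) : ℕ := (s.filter (· < x)).card

lemma cnt_insert {s : Finset (Fin n)} {y : Fin n} (hy : y ∉ s) (x : Fin n) :
    cnt (insert y s) x = cnt s x + if y < x then 1 else 0 := by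
  unfold cnt
  rw [Finset.filter_insert]
  split_ifs with h
  · rw [Finset.card_insert_of_notMem (fun hc => hy (Finset.mem_filter.1 hc).1)]
  · rw [add_zero]

lemma exists_insert_of_subset {α β : Finset (Fin n)} {d : ℕ} (h : α ⊆ β)
    (hα : α.card = d) (hβ : β.card = d + 1) : ∃ x ∉ α, β = insert x α := by
  have hcard : (β \ α).card = 1 := by
    rw [Finset.card_sdiff_of_subset h, hα, hβ]; omega
  obtain ⟨x, hx⟩ := Finset.card_eq_one.1 hcard
  refine ⟨x, ?_, ?_⟩
  · have : x ∈ β \ α := hx ▸ Finset.mem_singleton_self x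
    exact (Finset.mem_sdiff.1 this).2
  · have h1 : β = α ∪ (β \ α) := by rw [Finset.union_sdiff_of_subset h]
    rw [h1, hx, Finset.union_comm]
    exact (Finset.insert_eq x α).symm

lemma Wj_apply_insert {d : ℕ} (α : {s : Finset (Fin n) // s.card = d})
    (β : {s : Finset (Fin n) // s.card = d + 1}) {x : Fin n} (hx : x ∉ α.1)
    (hβ : β.1 = insert x α.1) : Wj n d α β = (-1 : ℝ) ^ cnt α.1 x := by
  have hsub : α.1 ⊆ β.1 := by rw [hβ]; exact Finset.subset_insert _ _
  have hsd : β.1 \ α.1 = {x} := by rw [hβ, Finset.insert_sdiff_cancel hx]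
  unfold Wj
  rw [if_pos hsub]
  congr 1
  have h2 : (β.1.filter (fun y => ∃ x' ∈ β.1 \ α.1, y < x')) = β.1.filter (· < x) := by
    apply Finset.filter_congr
    intro y _
    simp [hsd]
  rw [h2]
  show (β.1.filter (· < x)).card = cnt α.1 x
  rw [hβ]
  have h3 := cnt_insert hx x
  unfold cnt at h3 ⊢
  rw [h3]; simp

lemma Wj_apply_not_subset {d : ℕ} (α : {s : Finset (Fin n) // s.card = d})
    (β : {s : Finset (Fin n) // s.card = d + 1}) (h : ¬ α.1 ⊆ β.1) :
    Wj n d α β = 0 := if_neg h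

end Aux
section Aux2
open Finset

variable {n : ℕ}

lemma neg_one_ite_sum {x y : Fin n} (hxy : x ≠ y) (a b : ℕ) :
    (-1 : ℝ) ^ a * (-1) ^ (b + if x < y then 1 else 0)
      + (-1 : ℝ) ^ b * (-1) ^ (a + if y < x then 1 else 0) = 0 := by
  rcases lt_or_gt_of_ne hxy with h | h
  · rw [if_pos h, if_neg (asymm h)]
    ring
  · rw [if_neg (asymm h), if_pos h]
    ring

lemma Wj_mul_Wj (d : ℕ) : Wj n d * Wj n (d + 1) = 0 := by
  ext α γ
  rw [Matrix.mul_apply, Matrix.zero_apply]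
  by_cases hαγ : α.1 ⊆ γ.1
  · -- γ \ α has two elements x ≠ y
    have hcard : (γ.1 \ α.1).card = 2 := by
      rw [Finset.card_sdiff_of_subset hαγ, α.2, γ.2]; omega
    obtain ⟨x, y, hxy, hsd⟩ := Finset.card_eq_two.1 hcard
    have hxγ : x ∈ γ.1 ∧ x ∉ α.1 := by
      have : x ∈ γ.1 \ α.1 := by rw [hsd]; simp
      exact Finset.mem_sdiff.1 this
    have hyγ : y ∈ γ.1 ∧ y ∉ α.1 := by
      have : y ∈ γ.1 \ α.1 := by rw [hsd]; simp
      exact Finset.mem_sdiff.1 this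
    have hγeq : γ.1 = insert y (insert x α.1) := by
      have h1 : γ.1 = α.1 ∪ (γ.1 \ α.1) := (Finset.union_sdiff_of_subset hαγ).symm
      rw [h1, hsd]
      ext z
      simp only [Finset.mem_union, Finset.mem_insert, Finset.mem_singleton]
      tauto
    have hγeq' : γ.1 = insert x (insert y α.1) := by
      rw [hγeq, Finset.insert_comm]
    have hxin : x ∉ insert y α.1 := by
      simp [hxy, hxγ.2]
    have hyin : y ∉ insert x α.1 := by
      simp [Ne.symm hxy, hyγ.2]
    have hβ1card : (insert x α.1).card = d + 1 := by
      rw [Finset.card_insert_of_notMem hxγ.2, α.2]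
    have hβ2card : (insert y α.1).card = d + 1 := by
      rw [Finset.card_insert_of_notMem hyγ.2, α.2]
    set β₁ : {s : Finset (Fin n) // s.card = d + 1} := ⟨insert x α.1, hβ1card⟩
    set β₂ : {s : Finset (Fin n) // s.card = d + 1} := ⟨insert y α.1, hβ2card⟩
    have hne : β₁ ≠ β₂ := by
      intro hc
      apply hxy
      have : x ∈ β₂.1 := by rw [← hc]; simp [β₁]
      rcases Finset.mem_insert.1 this with h | h
      · exact h
      · exact absurd h hxγ.2
    rw [Finset.sum_eq_add_of_mem β₁ β₂ (Finset.mem_univ _) (Finset.mem_univ _) hne ?_]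
    · -- compute the two terms
      rw [Wj_apply_insert α β₁ hxγ.2 rfl, Wj_apply_insert α β₂ hyγ.2 rfl,
        Wj_apply_insert β₁ γ hyin hγeq, Wj_apply_insert β₂ γ hxin hγeq',
        cnt_insert hxγ.2 y, cnt_insert hyγ.2 x]
      exact neg_one_ite_sum hxy _ _
    · -- all other terms vanish
      intro β _ hb
      obtain ⟨hb1, hb2⟩ := hb
      by_cases h1 : α.1 ⊆ β.1
      · by_cases h2 : β.1 ⊆ γ.1
        · exfalso
          obtain ⟨z, hz, hβeq⟩ := exists_insert_of_subset h1 α.2 β.2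
          have hzsd : z ∈ γ.1 \ α.1 := by
            refine Finset.mem_sdiff.2 ⟨h2 ?_, hz⟩
            rw [hβeq]; simp
          rw [hsd] at hzsd
          rcases Finset.mem_insert.1 hzsd with h | h
          · exact hb1 (Subtype.ext (by rw [hβeq, h]))
          · exact hb2 (Subtype.ext (by rw [hβeq, Finset.mem_singleton.1 h]))
        · rw [Wj_apply_not_subset β γ h2, mul_zero]
      · rw [Wj_apply_not_subset α β h1, zero_mul]
  · apply Finset.sum_eq_zero
    intro β _
    by_cases h1 : α.1 ⊆ β.1
    · by_cases h2 : β.1 ⊆ γ.1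
      · exact absurd (h1.trans h2) hαγ
      · rw [Wj_apply_not_subset β γ h2, mul_zero]
    · rw [Wj_apply_not_subset α β h1, zero_mul]

end Aux2
section Aux3
open Finset

variable {n : ℕ}

lemma count_subsets {k : ℕ} (β : Finset (Fin n)) (hβ : β.card = k + 1) :
    (Finset.univ.filter (fun α : {s : Finset (Fin n) // s.card = k} => α.1 ⊆ β)).card
      = k + 1 := by
  have : (Finset.univ.filter (fun α : {s : Finset (Fin n) // s.card = k} => α.1 ⊆ β)).card
      = (Finset.powersetCard k β).card := by
    apply Finset.card_bij (fun α _ => α.1)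
    · intro α hα
      rw [Finset.mem_powersetCard]
      exact ⟨(Finset.mem_filter.1 hα).2, α.2⟩
    · intro a ha b hb hab
      exact Subtype.ext hab
    · intro t ht
      rw [Finset.mem_powersetCard] at ht
      exact ⟨⟨t, ht.2⟩, Finset.mem_filter.2 ⟨Finset.mem_univ _, ht.1⟩, rfl⟩
  rw [this, Finset.card_powersetCard, hβ, Nat.choose_succ_self_right]

lemma count_supersets {k : ℕ} (β : Finset (Fin n)) (hβ : β.card = k) :
    (Finset.univ.filter (fun γ : {s : Finset (Fin n) // s.card = k + 1} => β ⊆ γ.1)).card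
      = n - k := by
  have : βᶜ.card
      = (Finset.univ.filter (fun γ : {s : Finset (Fin n) // s.card = k + 1} => β ⊆ γ.1)).card := by
    apply Finset.card_bij (fun x hx => (⟨insert x β, by
      rw [Finset.card_insert_of_notMem (Finset.mem_compl.1 hx), hβ]⟩ :
        {s : Finset (Fin n) // s.card = k + 1}))
    · intro x hx
      exact Finset.mem_filter.2 ⟨Finset.mem_univ _, Finset.subset_insert _ _⟩
    · intro a ha b hb hab
      have : insert a β = insert b β := congrArg Subtype.val hab
      have ha' : a ∈ insert b β := this ▸ Finset.mem_insert_self a β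
      rcases Finset.mem_insert.1 ha' with h | h
      · exact h
      · exact absurd h (Finset.mem_compl.1 ha)
    · intro γ hγ
      have hsub : β ⊆ γ.1 := (Finset.mem_filter.1 hγ).2
      obtain ⟨x, hx, hγeq⟩ := exists_insert_of_subset hsub hβ γ.2
      exact ⟨x, Finset.mem_compl.2 hx, Subtype.ext hγeq.symm⟩
  rw [← this, Finset.card_compl, hβ, Fintype.card_fin]

lemma inter_card_le_of_ne {β β' : Finset (Fin n)} (h : β.card = β'.card) (hne : β ≠ β') :
    (β ∩ β').card < β.card := by
  rcases lt_or_eq_of_le (Finset.card_le_card (Finset.inter_subset_left (s₂ := β'))) with hlt | heq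
  · exact hlt
  · exfalso
    have h1 : β ⊆ β ∩ β' :=
      (Finset.eq_of_subset_of_card_le Finset.inter_subset_left (le_of_eq heq.symm)).symm ▸
        Finset.Subset.refl _
    have h2 : β ⊆ β' := h1.trans Finset.inter_subset_right
    exact hne (Finset.eq_of_subset_of_card_le h2 (le_of_eq h.symm))

lemma neg_one_ite_sum' {x y : Fin n} (hxy : x ≠ y) (a b : ℕ) :
    (-1 : ℝ) ^ a * (-1) ^ b
      + (-1 : ℝ) ^ (b + if x < y then 1 else 0) * (-1) ^ (a + if y < x then 1 else 0) = 0 := by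
  rcases lt_or_gt_of_ne hxy with h | h
  · rw [if_pos h, if_neg (asymm h)]; ring
  · rw [if_neg (asymm h), if_pos h]; ring

lemma Wj_sq (d : ℕ) (α : {s : Finset (Fin n) // s.card = d})
    (β : {s : Finset (Fin n) // s.card = d + 1}) :
    Wj n d α β * Wj n d α β = if α.1 ⊆ β.1 then (1 : ℝ) else 0 := by
  by_cases h : α.1 ⊆ β.1
  · obtain ⟨x, hx, hβeq⟩ := exists_insert_of_subset h α.2 β.2
    rw [Wj_apply_insert α β hx hβeq, if_pos h, ← pow_add, ← two_mul, pow_mul]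
    norm_num
  · rw [Wj_apply_not_subset α β h, if_neg h, mul_zero]

lemma WjT_mul_Wj (d : ℕ) (hn : d + 1 ≤ n) :
    (Wj n d)ᵀ * Wj n d + Wj n (d + 1) * (Wj n (d + 1))ᵀ = (n : ℝ) • (1 : Matrix _ _ ℝ) := by
  ext β β'
  rw [Matrix.add_apply, Matrix.mul_apply, Matrix.mul_apply, Matrix.smul_apply, Matrix.one_apply]
  simp only [Matrix.transpose_apply]
  by_cases hββ' : β = β'
  · subst hββ'
    rw [if_pos rfl, smul_eq_mul, mul_one]
    have h1 : ∀ α : {s : Finset (Fin n) // s.card = d},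
        Wj n d α β * Wj n d α β = if α.1 ⊆ β.1 then (1 : ℝ) else 0 := fun α => Wj_sq d α β
    have h2 : ∀ γ : {s : Finset (Fin n) // s.card = d + 1 + 1},
        Wj n (d + 1) β γ * Wj n (d + 1) β γ = if β.1 ⊆ γ.1 then (1 : ℝ) else 0 :=
      fun γ => Wj_sq (d + 1) β γ
    rw [Finset.sum_congr rfl (fun α _ => h1 α), Finset.sum_congr rfl (fun γ _ => h2 γ),
      Finset.sum_boole, Finset.sum_boole, count_subsets β.1 β.2, count_supersets β.1 β.2]
    push_cast [Nat.cast_sub hn]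
    ring
  · rw [if_neg hββ', smul_zero]
    by_cases hcap : (β.1 ∩ β'.1).card = d
    · -- exactly one nonzero term in each sum, and they cancel
      obtain ⟨A, hA⟩ : ∃ A : Finset (Fin n), A = β.1 ∩ β'.1 := ⟨_, rfl⟩
      rw [← hA] at hcap
      have hsub1 : A ⊆ β.1 := hA ▸ Finset.inter_subset_left
      have hsub2 : A ⊆ β'.1 := hA ▸ Finset.inter_subset_right
      set α₀ : {s : Finset (Fin n) // s.card = d} := ⟨A, hcap⟩
      obtain ⟨x, hx, hβeq⟩ := exists_insert_of_subset hsub1 hcap β.2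
      obtain ⟨y, hy, hβ'eq⟩ := exists_insert_of_subset hsub2 hcap β'.2
      have hxy : x ≠ y := by
        intro hc
        apply hββ'
        apply Subtype.ext
        rw [hβeq, hβ'eq, hc]
      have hyβ : y ∉ β.1 := by
        intro hc
        have : y ∈ A := hA ▸ Finset.mem_inter.2 ⟨hc, by rw [hβ'eq]; simp⟩
        exact hy this
      have hxβ' : x ∉ β'.1 := by
        intro hc
        have : x ∈ A := hA ▸ Finset.mem_inter.2 ⟨by rw [hβeq]; simp, hc⟩
        exact hx this
      have hγ0card : (insert y β.1).card = d + 1 + 1 := by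
        rw [Finset.card_insert_of_notMem hyβ, β.2]
      set γ₀ : {s : Finset (Fin n) // s.card = d + 1 + 1} := ⟨insert y β.1, hγ0card⟩
      have hγ0eq' : γ₀.1 = insert x β'.1 := by
        show insert y β.1 = insert x β'.1
        rw [hβeq, hβ'eq, Finset.insert_comm]
      have hunion : β.1 ∪ β'.1 = γ₀.1 := by
        show β.1 ∪ β'.1 = insert y β.1
        rw [hβ'eq]
        ext z
        simp only [Finset.mem_union, Finset.mem_insert]
        constructor
        · rintro (h | h | h)
          · exact Or.inr h
          · exact Or.inl h
          · exact Or.inr (hsub1 h)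
        · rintro (h | h)
          · exact Or.inr (Or.inl h)
          · exact Or.inl h
      rw [Finset.sum_eq_single α₀ ?_ (fun hc => absurd (Finset.mem_univ _) hc),
        Finset.sum_eq_single γ₀ ?_ (fun hc => absurd (Finset.mem_univ _) hc)]
      · rw [Wj_apply_insert α₀ β hx hβeq, Wj_apply_insert α₀ β' hy hβ'eq,
          Wj_apply_insert β γ₀ hyβ rfl, Wj_apply_insert β' γ₀ hxβ' hγ0eq',
          hβeq, hβ'eq, cnt_insert hx y, cnt_insert hy x]
        exact neg_one_ite_sum' hxy _ _
      · intro γ _ hγne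
        by_cases h1 : β.1 ⊆ γ.1
        · by_cases h2 : β'.1 ⊆ γ.1
          · exfalso
            apply hγne
            apply Subtype.ext
            have hsub : γ₀.1 ⊆ γ.1 := hunion ▸ Finset.union_subset h1 h2
            exact (Finset.eq_of_subset_of_card_le hsub (by rw [γ.2, γ₀.2])).symm
          · rw [Wj_apply_not_subset β' γ h2, mul_zero]
        · rw [Wj_apply_not_subset β γ h1, zero_mul]
      · intro α _ hαne
        by_cases h1 : α.1 ⊆ β.1
        · by_cases h2 : α.1 ⊆ β'.1
          · exfalso
            apply hαne
            apply Subtype.ext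
            have hsub : α.1 ⊆ α₀.1 := by
              show α.1 ⊆ A
              rw [hA]
              exact Finset.subset_inter h1 h2
            exact Finset.eq_of_subset_of_card_le hsub (by rw [α.2, α₀.2])
          · rw [Wj_apply_not_subset α β' h2, mul_zero]
        · rw [Wj_apply_not_subset α β h1, zero_mul]
    · -- all terms vanish in both sums
      have hlt : (β.1 ∩ β'.1).card < d + 1 := by
        have := inter_card_le_of_ne (β.2.trans β'.2.symm) (fun hc => hββ' (Subtype.ext hc))
        omega
      rw [Finset.sum_eq_zero, Finset.sum_eq_zero, add_zero]
      · intro γ _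
        by_cases h1 : β.1 ⊆ γ.1
        · by_cases h2 : β'.1 ⊆ γ.1
          · exfalso
            have hsub : β.1 ∪ β'.1 ⊆ γ.1 := Finset.union_subset h1 h2
            have hcards := Finset.card_union_add_card_inter β.1 β'.1
            have hle := Finset.card_le_card hsub
            rw [β.2, β'.2, γ.2] at *
            omega
          · rw [Wj_apply_not_subset β' γ h2, mul_zero]
        · rw [Wj_apply_not_subset β γ h1, zero_mul]
      · intro α _
        by_cases h1 : α.1 ⊆ β.1
        · by_cases h2 : α.1 ⊆ β'.1
          · exfalso
            have hsub : α.1 ⊆ β.1 ∩ β'.1 := Finset.subset_inter h1 h2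
            have hle := Finset.card_le_card hsub
            rw [α.2] at hle
            omega
          · rw [Wj_apply_not_subset α β' h2, mul_zero]
        · rw [Wj_apply_not_subset α β h1, zero_mul]

end Aux3
section Aux4
open Finset

lemma Pj_sq {n : ℕ} (d : ℕ) (hn : d + 1 ≤ n) :
    Pj n d * Pj n d = (n : ℝ) • Pj n d := by
  have h1 := Wj_mul_Wj (n := n) d
  have h2 : (Wj n d)ᵀ * Wj n d
      = (n : ℝ) • (1 : Matrix _ _ ℝ) - Wj n (d + 1) * (Wj n (d + 1))ᵀ :=
    eq_sub_of_add_eq (WjT_mul_Wj d hn)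
  have key : Pj n d * Pj n d
      = Wj n d * ((Wj n d)ᵀ * Wj n d) * (Wj n d)ᵀ := by
    simp only [Pj, Matrix.mul_assoc]
  rw [key, h2, Matrix.mul_sub, Matrix.sub_mul, Matrix.mul_smul, Matrix.smul_mul, Matrix.mul_one]
  have hz : Wj n d * (Wj n (d + 1) * (Wj n (d + 1))ᵀ) * (Wj n d)ᵀ = 0 := by
    rw [← Matrix.mul_assoc (Wj n d), h1, Matrix.zero_mul, Matrix.zero_mul]
  rw [hz, sub_zero, Pj]

lemma trace_Pj {n : ℕ} (d : ℕ) (hdn : d ≤ n) :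
    (Pj n d).trace = ((n * Nat.choose (n - 1) d : ℕ) : ℝ) := by
  have hdiag : ∀ α : {s : Finset (Fin n) // s.card = d},
      Pj n d α α = ((n - d : ℕ) : ℝ) := by
    intro α
    rw [Pj, Matrix.mul_apply]
    simp only [Matrix.transpose_apply]
    rw [Finset.sum_congr rfl (fun β _ => Wj_sq d α β), Finset.sum_boole,
      count_supersets α.1 α.2]
  rw [Matrix.trace]
  simp only [Matrix.diag]
  rw [Finset.sum_congr rfl (fun α _ => hdiag α), Finset.sum_const, Finset.card_univ,
    Fintype.card_finset_len, Fintype.card_fin, nsmul_eq_mul, ← Nat.cast_mul]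
  have h1 : Nat.choose n d * (n - d) = Nat.choose n (d + 1) * (d + 1) :=
    (Nat.choose_succ_right_eq n d).symm
  have h2 : n * Nat.choose (n - 1) d = Nat.choose n (d + 1) * (d + 1) := by
    cases n with
    | zero => simp
    | succ m => simpa [Nat.succ_sub_one] using Nat.add_one_mul_choose_eq m d
  exact Nat.cast_inj.2 (by omega)

end Aux4
section Aux5
open Finset

variable {m : Type*} [Fintype m] [DecidableEq m]

lemma charpoly_diagonal' (v : m → ℝ) :
    (Matrix.diagonal v).charpoly = ∏ i, (X - C (v i)) := by
  have h : (Matrix.diagonal v).charmatrix = Matrix.diagonal (fun i => X - C (v i)) := by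
    ext i j
    by_cases hij : i = j
    · subst hij
      simp
    · rw [Matrix.charmatrix_apply_ne _ _ _ hij, Matrix.diagonal_apply_ne _ hij,
        Matrix.diagonal_apply_ne _ hij, map_zero, neg_zero]
  rw [Matrix.charpoly, h, Matrix.det_diagonal]

lemma charpoly_unitary_conj (U : Matrix.unitaryGroup m ℝ) (D : Matrix m m ℝ) :
    ((U : Matrix m m ℝ) * D * (star U : Matrix m m ℝ)).charpoly = D.charpoly := by
  set f : Matrix m m ℝ →+* Matrix m m ℝ[X] := RingHom.mapMatrix (Polynomial.C : ℝ →+* ℝ[X]) with hf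
  have hUU : (U : Matrix m m ℝ) * (star U : Matrix m m ℝ) = 1 :=
    Matrix.mem_unitaryGroup_iff.mp U.2
  have hscal : ∀ M : Matrix m m ℝ[X], Matrix.scalar m (X : ℝ[X]) * M
      = M * Matrix.scalar m (X : ℝ[X]) :=
    fun M => (Matrix.scalar_commute (X : ℝ[X]) (fun r => Commute.all _ _) M).eq
  have hcm : Matrix.charmatrix ((U : Matrix m m ℝ) * D * (star U : Matrix m m ℝ))
      = f (U : Matrix m m ℝ) * Matrix.charmatrix D * f (star U : Matrix m m ℝ) := by
    unfold Matrix.charmatrix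
    rw [Matrix.mul_sub, Matrix.sub_mul, _root_.map_mul f, _root_.map_mul f]
    congr 1
    rw [← hscal, Matrix.mul_assoc, ← _root_.map_mul f, hUU, _root_.map_one f, Matrix.mul_one]
  rw [Matrix.charpoly, Matrix.charpoly, hcm, Matrix.det_mul, Matrix.det_mul, mul_comm,
    ← mul_assoc, ← Matrix.det_mul, ← _root_.map_mul f]
  have h2 : (star U : Matrix m m ℝ) * (U : Matrix m m ℝ) = 1 :=
    Matrix.mem_unitaryGroup_iff'.mp U.2
  rw [h2, _root_.map_one f, Matrix.det_one, one_mul]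

end Aux5
/-- For all integers `d ≥ 1` and `n ≥ d + 1`, with
`P_{n,d} := W_{n,d}·W_{n,d}ᵀ`, one has `P² = n·P` and `rank(P) = C(n−1,d)`;
consequently the eigenvalues of `P` are `n` with multiplicity `C(n−1,d)` and `0` with
multiplicity `C(n−1,d−1)` (stated via the characteristic polynomial). -/
theorem stmt_9 (n d : ℕ) (hd : 1 ≤ d) (hn : d + 1 ≤ n) :
    Pj n d * Pj n d = (n : ℝ) • Pj n d ∧
    (Pj n d).rank = (n - 1).choose d ∧
    (Pj n d).charpoly =
      (X - C (n : ℝ)) ^ ((n - 1).choose d) * X ^ ((n - 1).choose (d - 1)) := by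
  classical
  obtain ⟨e, rfl⟩ : ∃ e, d = e + 1 := ⟨d - 1, by omega⟩
  set d := e + 1 with hd_def
  obtain ⟨m, hm⟩ : ∃ m, n = m + 1 := ⟨n - 1, by omega⟩
  have hn0 : (n : ℝ) ≠ 0 := Nat.cast_ne_zero.2 (by omega)
  have hP2 := Pj_sq d hn
  refine ⟨hP2, ?_⟩
  have hHerm : (Pj n d).IsHermitian := by
    rw [Pj, ← Matrix.conjTranspose_eq_transpose_of_trivial]
    exact Matrix.isHermitian_mul_conjTranspose_self (Wj n d)
  set μ := hHerm.eigenvalues with hμdef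
  have heig : ∀ i, μ i = 0 ∨ μ i = n := by
    intro i
    have hv := hHerm.mulVec_eigenvectorBasis i
    have hvne : ⇑(hHerm.eigenvectorBasis i) ≠ 0 := by
      have h0 := hHerm.eigenvectorBasis.orthonormal.ne_zero i
      intro hc
      apply h0
      ext x
      exact congrFun hc x
    have h1 : (Pj n d * Pj n d) *ᵥ ⇑(hHerm.eigenvectorBasis i)
        = (μ i * μ i) • ⇑(hHerm.eigenvectorBasis i) := by
      rw [← Matrix.mulVec_mulVec, hv, Matrix.mulVec_smul, hv, smul_smul]
    rw [hP2, Matrix.smul_mulVec, hv, smul_smul] at h1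
    have h2 : (μ i * μ i - n * μ i) • ⇑(hHerm.eigenvectorBasis i) = 0 := by
      rw [sub_smul, h1, sub_self]
    rcases smul_eq_zero.1 h2 with h | h
    · have h3 : μ i * (μ i - n) = 0 := by linear_combination h
      rcases mul_eq_zero.1 h3 with h4 | h4
      · exact Or.inl h4
      · exact Or.inr (by linarith)
    · exact absurd h hvne
  set k := (Finset.univ.filter (fun i => μ i = (n : ℝ))).card with hk_def
  have htrace : (Pj n d).trace = ∑ i, μ i := by
    conv_lhs => rw [hHerm.spectral_theorem, Unitary.conjStarAlgAut_apply]
    rw [Matrix.trace_mul_cycle, Matrix.mem_unitaryGroup_iff'.mp hHerm.eigenvectorUnitary.2,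
      Matrix.one_mul, Matrix.trace_diagonal]
    simp [hμdef]
  have hofr : (RCLike.ofReal ∘ μ : _ → ℝ) = μ := by
    ext i
    simp
  have hsum : ∑ i, μ i = (k : ℝ) * n := by
    rw [← Finset.sum_filter_add_sum_filter_not Finset.univ (fun i => μ i = (n : ℝ))]
    have e1 : ∑ i ∈ Finset.univ.filter (fun i => μ i = (n : ℝ)), μ i = (k : ℝ) * n := by
      rw [Finset.sum_congr rfl (fun i hi => (Finset.mem_filter.1 hi).2), Finset.sum_const,
        nsmul_eq_mul]
    have e2 : ∑ i ∈ Finset.univ.filter (fun i => ¬ μ i = (n : ℝ)), μ i = 0 := by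
      apply Finset.sum_eq_zero
      intro i hi
      rcases heig i with h | h
      · exact h
      · exact absurd h (Finset.mem_filter.1 hi).2
    rw [e1, e2, add_zero]
  have hkval : k = Nat.choose (n - 1) d := by
    have h1 : ((k : ℝ)) * n = ((n * Nat.choose (n - 1) d : ℕ) : ℝ) := by
      rw [← hsum, ← htrace, trace_Pj d (by omega)]
    have h2 : ((k * n : ℕ) : ℝ) = ((Nat.choose (n - 1) d * n : ℕ) : ℝ) := by
      push_cast
      rw [h1]
      push_cast
      ring
    have h3 := Nat.cast_inj (R := ℝ) |>.1 h2
    have hn1 : 0 < n := by omega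
    exact Nat.eq_of_mul_eq_mul_right hn1 h3
  have hNcard : Fintype.card {s : Finset (Fin n) // s.card = d} = Nat.choose n d := by
    rw [Fintype.card_finset_len, Fintype.card_fin]
  have hkle : k ≤ Fintype.card {s : Finset (Fin n) // s.card = d} := by
    rw [← Finset.card_univ]
    exact Finset.card_le_card (Finset.filter_subset _ _)
  have hrank : (Pj n d).rank = (n - 1).choose d := by
    rw [hHerm.rank_eq_card_non_zero_eigs, Fintype.card_subtype, ← hkval]
    congr 1
    apply Finset.filter_congr
    intro i _
    constructor
    · intro h
      rcases heig i with h' | h'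
      · exact absurd h' h
      · exact h'
    · intro h
      show μ i ≠ 0
      rw [h]
      exact hn0
  refine ⟨hrank, ?_⟩
  have hcpd : (Pj n d).charpoly = ∏ i, (X - C (μ i)) := by
    conv_lhs => rw [hHerm.spectral_theorem, Unitary.conjStarAlgAut_apply]
    rw [charpoly_unitary_conj hHerm.eigenvectorUnitary, hofr, charpoly_diagonal']
  rw [hcpd, ← Finset.prod_filter_mul_prod_filter_not Finset.univ (fun i => μ i = (n : ℝ))]
  have e1 : ∏ i ∈ Finset.univ.filter (fun i => μ i = (n : ℝ)), (X - C (μ i))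
      = (X - C (n : ℝ)) ^ ((n - 1).choose d) := by
    rw [Finset.prod_congr rfl (fun i hi => by rw [(Finset.mem_filter.1 hi).2]),
      Finset.prod_const, ← hk_def, hkval]
  have e2 : ∏ i ∈ Finset.univ.filter (fun i => ¬ μ i = (n : ℝ)), (X - C (μ i))
      = X ^ ((n - 1).choose (d - 1)) := by
    have : ∀ i ∈ Finset.univ.filter (fun i => ¬ μ i = (n : ℝ)), (X - C (μ i)) = X := by
      intro i hi
      rcases heig i with h | h
      · rw [h, map_zero, sub_zero]
      · exact absurd h (Finset.mem_filter.1 hi).2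
    rw [Finset.prod_congr rfl this, Finset.prod_const]
    congr 1
    have hsplit := Finset.card_filter_add_card_filter_not
      (s := (Finset.univ : Finset {s : Finset (Fin n) // s.card = d}))
      (p := fun i => μ i = (n : ℝ))
    rw [Finset.card_univ, hNcard] at hsplit
    have hpascal : Nat.choose n d = Nat.choose (n - 1) (d - 1) + Nat.choose (n - 1) d := by
      subst hm
      simp only [Nat.add_sub_cancel, hd_def, Nat.add_sub_cancel]
      exact Nat.choose_succ_succ m e
    omega
  rw [e1, e2]
end

section
/- Let d ≥ 1 be an integer. Then the signed adjacency matrix A_{2d,d} of the Johnson graph J(2d,d) is a symmetric weighing matrix of weight d² and order C(2d,d): all entries of A_{2d,d} lie in {0, 1, −1} and A_{2d,d} · A_{2d,d}ᵀ = d² · I. -/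
open Matrix Polynomial

namespace S14

def sgn {n : ℕ} (s : Finset (Fin n)) (w : Fin n) : ℝ :=
  (-1) ^ ((s.filter (fun y => y < w)).card)

lemma sgn_sq {n : ℕ} (s : Finset (Fin n)) (w : Fin n) : sgn s w * sgn s w = 1 := by
  simp [sgn, ← pow_add, ← two_mul, pow_mul]

lemma sgn_insert {n : ℕ} {s : Finset (Fin n)} {w : Fin n} (hw : w ∉ s) (v : Fin n) :
    sgn (insert w s) v = (if w < v then (-1:ℝ) else 1) * sgn s v := by
  unfold sgn
  rw [Finset.filter_insert]
  split
  · rw [Finset.card_insert_of_notMem (by simp [hw])]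
    rw [pow_succ, mul_comm]
  · rw [one_mul]

lemma hjExp_comm {n : ℕ} (α β : Finset (Fin n)) : hjExp α β = hjExp β α := by
  unfold hjExp; rw [Finset.inter_comm, symmDiff_comm]

variable {n e : ℕ} {γ : Finset (Fin n)} {z x : Fin n}

lemma inter_insert (hz : z ∉ γ) (hx : x ∉ γ) (hne : z ≠ x) :
    (insert z γ) ∩ (insert x γ) = γ := by
  ext l
  simp only [Finset.mem_inter, Finset.mem_insert]
  constructor
  · rintro ⟨h1 | h1, h2 | h2⟩ <;> first | assumption | (subst h1; simp_all)
  · intro h; exact ⟨Or.inr h, Or.inr h⟩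

lemma symmDiff_insert (hz : z ∉ γ) (hx : x ∉ γ) (hne : z ≠ x) :
    symmDiff (insert z γ) (insert x γ) = {z, x} := by
  ext l
  simp only [Finset.mem_symmDiff, Finset.mem_insert, Finset.mem_singleton]
  constructor
  · rintro (⟨h1 | h1, h2⟩ | ⟨h1 | h1, h2⟩) <;> simp_all
  · rintro (rfl | rfl)
    · exact Or.inl ⟨Or.inl rfl, by simp [hne, hz]⟩
    · exact Or.inr ⟨Or.inl rfl, by simp [Ne.symm hne, hx]⟩

lemma card_split (hz : z ∉ γ) (hlt : z < x) :
    (γ.filter (fun y => y < x)).card =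
      (γ.filter (fun y => y < z)).card + (γ.filter (fun l => z < l ∧ l < x)).card := by
  rw [← Finset.card_union_of_disjoint (by
    simp only [Finset.disjoint_left, Finset.mem_filter]
    rintro a ⟨_, h1⟩ ⟨_, h2, _⟩; exact absurd (h1.trans h2) (lt_irrefl a))]
  congr 1
  ext l
  simp only [Finset.mem_filter, Finset.mem_union]
  constructor
  · rintro ⟨hl, hlx⟩
    rcases lt_trichotomy l z with h | h | h
    · exact Or.inl ⟨hl, h⟩
    · subst h; exact absurd hl hz
    · exact Or.inr ⟨hl, h, hlx⟩
  · rintro (⟨hl, h⟩ | ⟨hl, h, h'⟩)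
    · exact ⟨hl, h.trans hlt⟩
    · exact ⟨hl, h'⟩

lemma hjExp_pair (hz : z ∉ γ) (hx : x ∉ γ) (hlt : z < x) :
    hjExp (insert z γ) (insert x γ) = (γ.filter (fun l => z < l ∧ l < x)).card := by
  unfold hjExp
  rw [inter_insert hz hx hlt.ne, symmDiff_insert hz hx hlt.ne]
  congr 1
  apply Finset.filter_congr
  intro l hl
  simp only [Finset.mem_insert, Finset.mem_singleton]
  constructor
  · rintro ⟨⟨i, hi, hil⟩, ⟨j, hj, hlj⟩⟩
    refine ⟨?_, ?_⟩
    · rcases hi with rfl | rfl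
      · exact hil
      · exact hlt.trans hil
    · rcases hj with rfl | rfl
      · exact hlj.trans hlt
      · exact hlj
  · rintro ⟨h1, h2⟩
    exact ⟨⟨z, Or.inl rfl, h1⟩, ⟨x, Or.inr rfl, h2⟩⟩

lemma key1 (hz : z ∉ γ) (hx : x ∉ γ) (hne : z ≠ x) :
    sgn γ z * sgn γ x = (-1 : ℝ) ^ hjExp (insert z γ) (insert x γ) := by
  rcases hne.lt_or_gt with h | h
  · rw [hjExp_pair hz hx h]
    unfold sgn
    rw [← pow_add, card_split hz h,
      show (γ.filter (fun y => y < z)).card + ((γ.filter (fun y => y < z)).card +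
        (γ.filter (fun l => z < l ∧ l < x)).card) =
        2 * (γ.filter (fun y => y < z)).card + (γ.filter (fun l => z < l ∧ l < x)).card by ring,
      pow_add, pow_mul]
    simp
  · rw [mul_comm]
    have hcomm := hjExp_comm (insert z γ) (insert x γ)
    rw [hcomm, hjExp_pair hx hz h]
    unfold sgn
    rw [← pow_add, card_split hx h,
      show (γ.filter (fun y => y < x)).card + ((γ.filter (fun y => y < x)).card +
        (γ.filter (fun l => x < l ∧ l < z)).card) =
        2 * (γ.filter (fun y => y < x)).card + (γ.filter (fun l => x < l ∧ l < z)).card by ring,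
      pow_add, pow_mul]
    simp

lemma key2 (hz : z ∉ γ) (hx : x ∉ γ) (hne : z ≠ x) :
    sgn (insert z γ) x * sgn (insert x γ) z
      = -((-1 : ℝ) ^ hjExp (insert z γ) (insert x γ)) := by
  rw [sgn_insert hz x, sgn_insert hx z, ← key1 hz hx hne]
  rcases hne.lt_or_gt with h | h
  · rw [if_pos h, if_neg (asymm h)]; ring
  · rw [if_neg (asymm h), if_pos h]; ring

lemma key3 (hz : z ∉ γ) (hx : x ∉ γ) (hne : z ≠ x) :
    sgn γ z * sgn (insert z γ) x + sgn γ x * sgn (insert x γ) z = 0 := by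
  rw [sgn_insert hz x, sgn_insert hx z]
  rcases hne.lt_or_gt with h | h
  · rw [if_pos h, if_neg (asymm h)]; ring
  · rw [if_neg (asymm h), if_pos h]; ring

lemma insert_insert_sdiff (hx : x ∉ γ) (hne : z ≠ x) :
    insert z (insert x γ) \ insert z γ = {x} := by
  ext l
  simp only [Finset.mem_sdiff, Finset.mem_insert, Finset.mem_singleton, not_or]
  constructor
  · rintro ⟨rfl | rfl | h, h2, h3⟩ <;> first | rfl | simp_all
  · rintro rfl
    exact ⟨Or.inr (Or.inl rfl), Ne.symm hne, hx⟩

/-- structure of pairs at symmDiff-distance 2 -/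
lemma struct {α β : Finset (Fin n)} (hc : α.card = β.card) (h2 : (symmDiff α β).card = 2) :
    ∃ γ z x, z ∉ γ ∧ x ∉ γ ∧ z ≠ x ∧ α = insert z γ ∧ β = insert x γ := by
  have hd : Disjoint (α \ β) (β \ α) := disjoint_sdiff_sdiff
  have hcc : (α \ β).card = (β \ α).card := Finset.card_sdiff_comm hc
  have hsum : (α \ β).card + (β \ α).card = 2 := by
    rw [← Finset.card_union_of_disjoint hd,
      show α \ β ∪ β \ α = symmDiff α β from (symmDiff_def α β).symm, h2]
  have h1 : (α \ β).card = 1 := by omega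
  have h1' : (β \ α).card = 1 := by omega
  obtain ⟨z, hz⟩ := Finset.card_eq_one.1 h1
  obtain ⟨x, hx⟩ := Finset.card_eq_one.1 h1'
  have hzα : z ∈ α ∧ z ∉ β := by
    have : z ∈ α \ β := hz ▸ Finset.mem_singleton_self z
    exact ⟨(Finset.mem_sdiff.1 this).1, (Finset.mem_sdiff.1 this).2⟩
  have hxβ : x ∈ β ∧ x ∉ α := by
    have : x ∈ β \ α := hx ▸ Finset.mem_singleton_self x
    exact ⟨(Finset.mem_sdiff.1 this).1, (Finset.mem_sdiff.1 this).2⟩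
  refine ⟨α ∩ β, z, x, by simp [hzα.2], by simp [hxβ.2], ?_, ?_, ?_⟩
  · rintro rfl; exact hzα.2 hxβ.1
  · ext l
    simp only [Finset.mem_insert, Finset.mem_inter]
    constructor
    · intro hl
      by_cases hlb : l ∈ β
      · exact Or.inr ⟨hl, hlb⟩
      · left
        have : l ∈ α \ β := Finset.mem_sdiff.2 ⟨hl, hlb⟩
        rw [hz] at this; exact Finset.mem_singleton.1 this
    · rintro (rfl | ⟨h, _⟩) <;> [exact hzα.1; exact h]
  · ext l
    simp only [Finset.mem_insert, Finset.mem_inter]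
    constructor
    · intro hl
      by_cases hla : l ∈ α
      · exact Or.inr ⟨hla, hl⟩
      · left
        have : l ∈ β \ α := Finset.mem_sdiff.2 ⟨hl, hla⟩
        rw [hx] at this; exact Finset.mem_singleton.1 this
    · rintro (rfl | ⟨_, h⟩) <;> [exact hxβ.1; exact h]

/-- if not adjacent and distinct (equal cards) then intersection is small -/
lemma inter_small {α β : Finset (Fin n)} (hc : α.card = β.card) (hne : α ≠ β)
    (hns : (symmDiff α β).card ≠ 2) : (α ∩ β).card + 2 ≤ α.card := by
  have hcc : (α \ β).card = (β \ α).card := Finset.card_sdiff_comm hc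
  have hsum : (α \ β).card + (β \ α).card = (symmDiff α β).card := by
    rw [← Finset.card_union_of_disjoint disjoint_sdiff_sdiff,
      show α \ β ∪ β \ α = symmDiff α β from (symmDiff_def α β).symm]
  have h1 : (α ∩ β).card + (α \ β).card = α.card := Finset.card_inter_add_card_sdiff α β
  have hpos : 1 ≤ (α \ β).card := by
    rcases Nat.eq_zero_or_pos (α \ β).card with h | h
    · exfalso
      have hsub : α ⊆ β := by
        intro a ha
        by_contra hb
        have : a ∈ α \ β := Finset.mem_sdiff.2 ⟨ha, hb⟩
        simp [Finset.card_eq_zero.1 h] at this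
      exact hne (Finset.eq_of_subset_of_card_le hsub hc.ge)
    · exact h
  omega

lemma wj_apply_of_subset (α : {s : Finset (Fin n) // s.card = e})
    (β : {s : Finset (Fin n) // s.card = e + 1}) (h : α.1 ⊆ β.1) {w : Fin n}
    (hw : β.1 \ α.1 = {w}) : Wj n e α β = sgn α.1 w := by
  have hwa : w ∉ α.1 := by
    have : w ∈ β.1 \ α.1 := hw ▸ Finset.mem_singleton_self w
    exact (Finset.mem_sdiff.1 this).2
  have hβ : β.1 = insert w α.1 := by
    rw [← Finset.union_sdiff_of_subset h, hw, Finset.union_comm]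
    rfl
  unfold Wj sgn
  rw [if_pos h]
  congr 1
  rw [hw]
  simp only [Finset.mem_singleton, exists_eq_left]
  rw [hβ, Finset.filter_insert, if_neg (lt_irrefl w)]

lemma wj_apply_zero (α : {s : Finset (Fin n) // s.card = e})
    (β : {s : Finset (Fin n) // s.card = e + 1}) (h : ¬ α.1 ⊆ β.1) : Wj n e α β = 0 :=
  if_neg h

lemma sdiff_singleton (α : {s : Finset (Fin n) // s.card = e})
    (β : {s : Finset (Fin n) // s.card = e + 1}) (h : α.1 ⊆ β.1) :
    ∃ w, β.1 \ α.1 = {w} ∧ w ∉ α.1 := by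
  have hcard : (β.1 \ α.1).card = 1 := by
    rw [Finset.card_sdiff_of_subset h, α.2, β.2]; omega
  obtain ⟨w, hw⟩ := Finset.card_eq_one.1 hcard
  refine ⟨w, hw, ?_⟩
  have : w ∈ β.1 \ α.1 := hw ▸ Finset.mem_singleton_self w
  exact (Finset.mem_sdiff.1 this).2

lemma count1 (α : Finset (Fin n)) (hα : α.card = e + 1) :
    (Finset.univ.filter (fun γ : {s : Finset (Fin n) // s.card = e} => γ.1 ⊆ α)).card
      = e + 1 := by
  have h : (Finset.univ.filter
        (fun γ : {s : Finset (Fin n) // s.card = e} => γ.1 ⊆ α)).card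
      = (α.powersetCard e).card := by
    apply Finset.card_bij (fun γ _ => γ.1)
    · intro γ hγ
      simp only [Finset.mem_filter] at hγ
      exact Finset.mem_powersetCard.2 ⟨hγ.2, γ.2⟩
    · intro γ _ γ' _ h
      exact Subtype.ext h
    · intro s hs
      obtain ⟨hs1, hs2⟩ := Finset.mem_powersetCard.1 hs
      exact ⟨⟨s, hs2⟩, by simp [hs1], rfl⟩
  rw [h, Finset.card_powersetCard, hα, Nat.choose_succ_self_right]

lemma count2 (α : Finset (Fin (2 * (e + 1)))) (hα : α.card = e + 1) :
    (Finset.univ.filter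
      (fun β : {s : Finset (Fin (2 * (e + 1))) // s.card = e + 1 + 1} => α ⊆ β.1)).card
      = e + 1 := by
  have h : (Finset.univ.filter
        (fun β : {s : Finset (Fin (2 * (e + 1))) // s.card = e + 1 + 1} => α ⊆ β.1)).card
      = (αᶜ.powersetCard 1).card := by
    apply Finset.card_bij (fun β _ => β.1 \ α)
    · intro β hβ
      simp only [Finset.mem_filter] at hβ
      refine Finset.mem_powersetCard.2 ⟨fun y hy => ?_, ?_⟩
      · exact Finset.mem_compl.2 (Finset.mem_sdiff.1 hy).2
      · rw [Finset.card_sdiff_of_subset hβ.2, β.2, hα]; omega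
    · intro β hβ β' hβ' h
      simp only [Finset.mem_filter] at hβ hβ'
      apply Subtype.ext
      rw [← Finset.union_sdiff_of_subset hβ.2, ← Finset.union_sdiff_of_subset hβ'.2]
      rw [h]
    · intro s hs
      obtain ⟨hs1, hs2⟩ := Finset.mem_powersetCard.1 hs
      have hdisj : Disjoint α s := by
        rw [Finset.disjoint_right]
        intro a ha
        exact Finset.mem_compl.1 (hs1 ha)
      refine ⟨⟨α ∪ s, by rw [Finset.card_union_of_disjoint hdisj, hα, hs2]⟩,
        by simp, ?_⟩
      simp only
      rw [Finset.union_sdiff_cancel_left hdisj]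
  rw [h, Finset.card_powersetCard, Finset.card_compl, hα]
  simp only [Fintype.card_fin]
  rw [show 2 * (e + 1) - (e + 1) = e + 1 by omega]
  exact Nat.choose_one_right _

end S14
namespace S14
variable {n e : ℕ}

lemma ajohnson_symm (n d : ℕ) : (Ajohnson n d).IsSymm := by
  ext i j
  show Ajohnson n d j i = Ajohnson n d i j
  unfold Ajohnson
  rw [symmDiff_comm j.1 i.1, hjExp_comm j.1 i.1]

lemma L4 (n e : ℕ) :
    (Wj n e)ᵀ * Wj n e = ((e + 1 : ℕ) : ℝ) • 1 + Ajohnson n (e + 1) := by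
  ext α β
  rw [Matrix.mul_apply]
  simp only [Matrix.transpose_apply]
  by_cases hab : α = β
  · subst hab
    have hterm : ∀ γ : {s : Finset (Fin n) // s.card = e},
        Wj n e γ α * Wj n e γ α = if γ.1 ⊆ α.1 then (1:ℝ) else 0 := by
      intro γ
      by_cases h : γ.1 ⊆ α.1
      · obtain ⟨w, hw, _⟩ := sdiff_singleton γ α h
        rw [wj_apply_of_subset γ α h hw, if_pos h, sgn_sq]
      · rw [wj_apply_zero γ α h, if_neg h, mul_zero]
    rw [Finset.sum_congr rfl (fun γ _ => hterm γ), Finset.sum_boole, count1 α.1 α.2]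
    simp only [Matrix.add_apply, Matrix.smul_apply, Matrix.one_apply_eq, smul_eq_mul, mul_one]
    unfold Ajohnson
    rw [if_neg (by simp)]
    simp
  · have hab1 : α.1 ≠ β.1 := fun h => hab (Subtype.ext h)
    have hRHS0 : (((e + 1 : ℕ) : ℝ) • (1 : Matrix _ _ ℝ)) α β = 0 := by
      simp [Matrix.one_apply_ne hab]
    by_cases hadj : (symmDiff α.1 β.1).card = 2
    · obtain ⟨γc, z, x, hz, hx, hzx, ha, hb⟩ := struct (α.2.trans β.2.symm) hadj
      have hγc : γc.card = e := by
        have h2 := α.2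
        rw [ha, Finset.card_insert_of_notMem hz] at h2
        omega
      rw [Fintype.sum_eq_single (⟨γc, hγc⟩ : {s : Finset (Fin n) // s.card = e})]
      · have hsa : γc ⊆ α.1 := by rw [ha]; exact Finset.subset_insert _ _
        have hsb : γc ⊆ β.1 := by rw [hb]; exact Finset.subset_insert _ _
        have hwa : α.1 \ γc = {z} := by rw [ha]; exact Finset.insert_sdiff_cancel hz
        have hwb : β.1 \ γc = {x} := by rw [hb]; exact Finset.insert_sdiff_cancel hx
        rw [wj_apply_of_subset ⟨γc, hγc⟩ α hsa hwa, wj_apply_of_subset ⟨γc, hγc⟩ β hsb hwb]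
        rw [Matrix.add_apply, hRHS0, zero_add]
        unfold Ajohnson
        rw [if_pos hadj]
        have : hjExp α.1 β.1 = hjExp (insert z γc) (insert x γc) := by rw [ha, hb]
        rw [this]
        exact key1 hz hx hzx
      · intro γ hγ
        by_cases h1 : γ.1 ⊆ α.1
        · by_cases h2 : γ.1 ⊆ β.1
          · exfalso
            apply hγ
            apply Subtype.ext
            apply Finset.eq_of_subset_of_card_le
            · have hsub : γ.1 ⊆ α.1 ∩ β.1 := Finset.subset_inter h1 h2
              rwa [ha, hb, inter_insert hz hx hzx] at hsub
            · rw [γ.2, hγc]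
          · rw [wj_apply_zero _ _ h2, mul_zero]
        · rw [wj_apply_zero _ _ h1, zero_mul]
    · rw [Matrix.add_apply, hRHS0, zero_add]
      unfold Ajohnson
      rw [if_neg hadj]
      apply Finset.sum_eq_zero
      intro γ _
      by_cases h1 : γ.1 ⊆ α.1
      · by_cases h2 : γ.1 ⊆ β.1
        · exfalso
          have hsub : γ.1 ⊆ α.1 ∩ β.1 := Finset.subset_inter h1 h2
          have hle := Finset.card_le_card hsub
          have hsm := inter_small (α.2.trans β.2.symm) hab1 hadj
          rw [γ.2] at hle
          rw [α.2] at hsm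
          omega
        · rw [wj_apply_zero _ _ h2, mul_zero]
      · rw [wj_apply_zero _ _ h1, zero_mul]

lemma L5 (e : ℕ) :
    Wj (2 * (e + 1)) (e + 1) * (Wj (2 * (e + 1)) (e + 1))ᵀ
      = ((e + 1 : ℕ) : ℝ) • 1 - Ajohnson (2 * (e + 1)) (e + 1) := by
  ext α β
  rw [Matrix.mul_apply]
  simp only [Matrix.transpose_apply]
  by_cases hab : α = β
  · subst hab
    have hterm : ∀ σ : {s : Finset (Fin (2 * (e + 1))) // s.card = e + 1 + 1},
        Wj (2 * (e + 1)) (e + 1) α σ * Wj (2 * (e + 1)) (e + 1) α σ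
          = if α.1 ⊆ σ.1 then (1:ℝ) else 0 := by
      intro σ
      by_cases h : α.1 ⊆ σ.1
      · obtain ⟨w, hw, _⟩ := sdiff_singleton α σ h
        rw [wj_apply_of_subset α σ h hw, if_pos h, sgn_sq]
      · rw [wj_apply_zero α σ h, if_neg h, mul_zero]
    rw [Finset.sum_congr rfl (fun σ _ => hterm σ), Finset.sum_boole, count2 α.1 α.2]
    simp only [Matrix.sub_apply, Matrix.smul_apply, Matrix.one_apply_eq, smul_eq_mul, mul_one]
    unfold Ajohnson
    rw [if_neg (by simp)]
    simp
  · have hab1 : α.1 ≠ β.1 := fun h => hab (Subtype.ext h)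
    have hRHS0 : (((e + 1 : ℕ) : ℝ) • (1 : Matrix _ _ ℝ)) α β = 0 := by
      simp [Matrix.one_apply_ne hab]
    by_cases hadj : (symmDiff α.1 β.1).card = 2
    · obtain ⟨γc, z, x, hz, hx, hzx, ha, hb⟩ := struct (α.2.trans β.2.symm) hadj
      have hzix : z ∉ insert x γc := by
        simp only [Finset.mem_insert, not_or]
        exact ⟨hzx, hz⟩
      have hσc : (insert z (insert x γc)).card = e + 1 + 1 := by
        rw [Finset.card_insert_of_notMem hzix, Finset.card_insert_of_notMem hx]
        have h2 := α.2
        rw [ha, Finset.card_insert_of_notMem hz] at h2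
        omega
      set σ₀ : {s : Finset (Fin (2 * (e + 1))) // s.card = e + 1 + 1} :=
        ⟨insert z (insert x γc), hσc⟩ with hσ₀
      rw [Fintype.sum_eq_single σ₀]
      · have hsa : α.1 ⊆ σ₀.1 := by
          rw [ha]
          exact Finset.insert_subset_insert _ (Finset.subset_insert _ _)
        have hsb : β.1 ⊆ σ₀.1 := by
          rw [hb]
          intro l hl
          rcases Finset.mem_insert.1 hl with rfl | hl
          · exact Finset.mem_insert.2 (Or.inr (Finset.mem_insert_self _ _))
          · exact Finset.mem_insert.2 (Or.inr (Finset.mem_insert.2 (Or.inr hl)))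
        have hwa : σ₀.1 \ α.1 = {x} := by
          rw [ha]
          exact insert_insert_sdiff hx hzx
        have hwb : σ₀.1 \ β.1 = {z} := by
          rw [hb]
          show insert z (insert x γc) \ insert x γc = {z}
          rw [Finset.insert_comm]
          exact insert_insert_sdiff hz (Ne.symm hzx)
        rw [wj_apply_of_subset α σ₀ hsa hwa, wj_apply_of_subset β σ₀ hsb hwb]
        rw [Matrix.sub_apply, hRHS0, zero_sub]
        unfold Ajohnson
        rw [if_pos hadj]
        have heq : hjExp α.1 β.1 = hjExp (insert z γc) (insert x γc) := by rw [ha, hb]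
        rw [heq, ha, hb]
        exact key2 hz hx hzx
      · intro σ hσ
        by_cases h1 : α.1 ⊆ σ.1
        · by_cases h2 : β.1 ⊆ σ.1
          · exfalso
            apply hσ
            apply Subtype.ext
            symm
            apply Finset.eq_of_subset_of_card_le
            · have hsub : α.1 ∪ β.1 ⊆ σ.1 := Finset.union_subset h1 h2
              have : σ₀.1 = α.1 ∪ β.1 := by
                rw [ha, hb]
                ext l
                simp only [hσ₀, Finset.mem_insert, Finset.mem_union]
                tauto
              rw [hσ₀]
              rw [this]
              exact hsub
            · rw [σ.2, hσc]
          · rw [wj_apply_zero _ _ h2, mul_zero]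
        · rw [wj_apply_zero _ _ h1, zero_mul]
    · rw [Matrix.sub_apply, hRHS0, zero_sub]
      unfold Ajohnson
      rw [if_neg hadj, neg_zero]
      apply Finset.sum_eq_zero
      intro σ _
      by_cases h1 : α.1 ⊆ σ.1
      · by_cases h2 : β.1 ⊆ σ.1
        · exfalso
          have hsub : α.1 ∪ β.1 ⊆ σ.1 := Finset.union_subset h1 h2
          have hle := Finset.card_le_card hsub
          have hcu : α.1.card + β.1.card = (α.1 ∪ β.1).card + (α.1 ∩ β.1).card :=
            (Finset.card_union_add_card_inter α.1 β.1).symm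
          have hsm := inter_small (α.2.trans β.2.symm) hab1 hadj
          rw [α.2] at hsm
          rw [α.2, β.2] at hcu
          rw [σ.2] at hle
          omega
        · rw [wj_apply_zero _ _ h2, mul_zero]
      · rw [wj_apply_zero _ _ h1, zero_mul]

end S14
namespace S14

lemma L3 (n e : ℕ) : Wj n e * Wj n (e + 1) = 0 := by
  ext γ β
  rw [Matrix.mul_apply, Matrix.zero_apply]
  by_cases hsub : γ.1 ⊆ β.1
  · have hcard2 : (β.1 \ γ.1).card = 2 := by
      rw [Finset.card_sdiff_of_subset hsub, γ.2, β.2]; omega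
    obtain ⟨z, x, hzx, hdiff⟩ := Finset.card_eq_two.1 hcard2
    have hzm : z ∈ β.1 \ γ.1 := by rw [hdiff]; simp
    have hxm : x ∈ β.1 \ γ.1 := by rw [hdiff]; simp
    have hz : z ∉ γ.1 := (Finset.mem_sdiff.1 hzm).2
    have hx : x ∉ γ.1 := (Finset.mem_sdiff.1 hxm).2
    have hzb : z ∈ β.1 := (Finset.mem_sdiff.1 hzm).1
    have hxb : x ∈ β.1 := (Finset.mem_sdiff.1 hxm).1
    have hβeq : β.1 = insert z (insert x γ.1) := by
      rw [← Finset.union_sdiff_of_subset hsub, hdiff]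
      ext l
      simp only [Finset.mem_union, Finset.mem_insert, Finset.mem_singleton]
      tauto
    have hc1 : (insert z γ.1).card = e + 1 := by
      rw [Finset.card_insert_of_notMem hz, γ.2]
    have hc2 : (insert x γ.1).card = e + 1 := by
      rw [Finset.card_insert_of_notMem hx, γ.2]
    set α₁ : {s : Finset (Fin n) // s.card = e + 1} := ⟨insert z γ.1, hc1⟩ with hα₁
    set α₂ : {s : Finset (Fin n) // s.card = e + 1} := ⟨insert x γ.1, hc2⟩ with hα₂
    have hne12 : α₁ ≠ α₂ := by
      intro h
      have hv : insert z γ.1 = insert x γ.1 := congrArg Subtype.val h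
      have : z ∈ insert x γ.1 := hv ▸ Finset.mem_insert_self z γ.1
      rcases Finset.mem_insert.1 this with h' | h'
      · exact hzx h'
      · exact hz h'
    have hsupp : ∀ a : {s : Finset (Fin n) // s.card = e + 1}, a ∈ Finset.univ →
        a ∉ ({α₁, α₂} : Finset _) → Wj n e γ a * Wj n (e + 1) a β = 0 := by
      intro a _ ha
      by_cases h1 : γ.1 ⊆ a.1
      · by_cases h2 : a.1 ⊆ β.1
        · exfalso
          apply ha
          have hsd : a.1 \ γ.1 ⊆ β.1 \ γ.1 := fun l hl =>
            Finset.mem_sdiff.2 ⟨h2 (Finset.mem_sdiff.1 hl).1, (Finset.mem_sdiff.1 hl).2⟩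
          have hsd1 : (a.1 \ γ.1).card = 1 := by
            rw [Finset.card_sdiff_of_subset h1, a.2, γ.2]; omega
          obtain ⟨w, hw⟩ := Finset.card_eq_one.1 hsd1
          have hwm : w ∈ β.1 \ γ.1 := hsd (hw ▸ Finset.mem_singleton_self w)
          have haw : a.1 = insert w γ.1 := by
            rw [← Finset.union_sdiff_of_subset h1, hw, Finset.union_comm]
            rfl
          rw [hdiff] at hwm
          rcases Finset.mem_insert.1 hwm with rfl | hwm'
          · exact Finset.mem_insert.2 (Or.inl (Subtype.ext haw))
          · rw [Finset.mem_singleton.1 hwm'] at haw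
            exact Finset.mem_insert.2 (Or.inr (Finset.mem_singleton.2 (Subtype.ext haw)))
        · rw [wj_apply_zero _ _ h2, mul_zero]
      · rw [wj_apply_zero _ _ h1, zero_mul]
    rw [← Finset.sum_subset (Finset.subset_univ ({α₁, α₂} : Finset _)) hsupp,
      Finset.sum_pair hne12]
    have e1 : Wj n e γ α₁ = sgn γ.1 z :=
      wj_apply_of_subset γ α₁ (Finset.subset_insert _ _) (Finset.insert_sdiff_cancel hz)
    have e2 : Wj n e γ α₂ = sgn γ.1 x :=
      wj_apply_of_subset γ α₂ (Finset.subset_insert _ _) (Finset.insert_sdiff_cancel hx)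
    have hs1 : α₁.1 ⊆ β.1 := by
      rw [hβeq]
      intro l hl
      rcases Finset.mem_insert.1 hl with rfl | hl
      · exact Finset.mem_insert_self _ _
      · exact Finset.mem_insert.2 (Or.inr (Finset.mem_insert.2 (Or.inr hl)))
    have hs2 : α₂.1 ⊆ β.1 := by
      rw [hβeq]
      intro l hl
      rcases Finset.mem_insert.1 hl with rfl | hl
      · exact Finset.mem_insert.2 (Or.inr (Finset.mem_insert_self _ _))
      · exact Finset.mem_insert.2 (Or.inr (Finset.mem_insert.2 (Or.inr hl)))
    have d1 : β.1 \ α₁.1 = {x} := by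
      rw [hβeq]
      exact insert_insert_sdiff hx hzx
    have d2 : β.1 \ α₂.1 = {z} := by
      rw [hβeq]
      show insert z (insert x γ.1) \ insert x γ.1 = {z}
      rw [Finset.insert_comm]
      exact insert_insert_sdiff hz (Ne.symm hzx)
    have e3 : Wj n (e + 1) α₁ β = sgn (insert z γ.1) x :=
      wj_apply_of_subset α₁ β hs1 d1
    have e4 : Wj n (e + 1) α₂ β = sgn (insert x γ.1) z :=
      wj_apply_of_subset α₂ β hs2 d2
    rw [e1, e2, e3, e4]
    exact key3 hz hx hzx
  · apply Finset.sum_eq_zero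
    intro a _
    by_cases h1 : γ.1 ⊆ a.1
    · by_cases h2 : a.1 ⊆ β.1
      · exact absurd (h1.trans h2) hsub
      · rw [wj_apply_zero _ _ h2, mul_zero]
    · rw [wj_apply_zero _ _ h1, zero_mul]

end S14

/-- For `d ≥ 1`, the signed adjacency matrix `A_{2d,d}` of the Johnson
graph `J(2d,d)` is a symmetric weighing matrix of weight `d²` and order `C(2d,d)`:
its entries lie in `{0, 1, −1}` and `A·Aᵀ = d²·I`. -/
theorem stmt_14 (d : ℕ) (hd : 1 ≤ d) :
    (Ajohnson (2 * d) d).IsSymm ∧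
    (∀ α β, Ajohnson (2 * d) d α β = 0 ∨ Ajohnson (2 * d) d α β = 1 ∨
      Ajohnson (2 * d) d α β = -1) ∧
    Ajohnson (2 * d) d * (Ajohnson (2 * d) d)ᵀ = ((d : ℝ) ^ 2) • (1 : Matrix _ _ ℝ) := by
  obtain ⟨e, rfl⟩ : ∃ e, d = e + 1 := ⟨d - 1, (Nat.succ_pred_eq_of_pos hd).symm⟩
  refine ⟨S14.ajohnson_symm _ _, ?_, ?_⟩
  · intro α β
    unfold Ajohnson
    split
    · rcases Nat.even_or_odd (hjExp α.1 β.1) with h | h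
      · exact Or.inr (Or.inl h.neg_one_pow)
      · exact Or.inr (Or.inr h.neg_one_pow)
    · exact Or.inl rfl
  · set A := Ajohnson (2 * (e + 1)) (e + 1) with hA
    set c : ℝ := ((e + 1 : ℕ) : ℝ) with hc
    have hsymm : Aᵀ = A := S14.ajohnson_symm _ _
    rw [hsymm]
    have h4 := S14.L4 (2 * (e + 1)) e
    have h5 := S14.L5 e
    have h3 := S14.L3 (2 * (e + 1)) e
    have hzero : (c • (1 : Matrix _ _ ℝ) + A) * (c • 1 - A) = 0 := by
      rw [← h4, ← h5, Matrix.mul_assoc, ← Matrix.mul_assoc (Wj (2 * (e + 1)) e), h3,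
        Matrix.zero_mul, Matrix.mul_zero]
    have hexp : (c • (1 : Matrix _ _ ℝ) + A) * (c • 1 - A)
        = (c ^ 2) • 1 - A * A := by
      have l1 : (c • (1 : Matrix {s : Finset (Fin (2*(e+1))) // s.card = e+1} {s : Finset (Fin (2*(e+1))) // s.card = e+1} ℝ)) * (c • (1 : Matrix {s : Finset (Fin (2*(e+1))) // s.card = e+1} {s : Finset (Fin (2*(e+1))) // s.card = e+1} ℝ)) = (c ^ 2) • (1 : Matrix {s : Finset (Fin (2*(e+1))) // s.card = e+1} {s : Finset (Fin (2*(e+1))) // s.card = e+1} ℝ) := by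
        rw [Matrix.smul_mul, Matrix.mul_smul, smul_smul, one_mul, ← pow_two]
      have l2 : (c • (1 : Matrix {s : Finset (Fin (2*(e+1))) // s.card = e+1} {s : Finset (Fin (2*(e+1))) // s.card = e+1} ℝ)) * A = c • A := by
        rw [Matrix.smul_mul, Matrix.one_mul]
      have l3 : A * (c • (1 : Matrix {s : Finset (Fin (2*(e+1))) // s.card = e+1} {s : Finset (Fin (2*(e+1))) // s.card = e+1} ℝ)) = c • A := by
        rw [Matrix.mul_smul, Matrix.mul_one]
      rw [mul_sub, add_mul, add_mul, l1, l2, l3]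
      abel
    rw [hexp] at hzero
    have : A * A = (c ^ 2) • 1 := by
      have := sub_eq_zero.1 hzero
      exact this.symm
    rw [this, hc]
end

section
/- Let n and d be positive integers with n ≥ 2d. Let S be a set of d-element subsets of {1,…,n}. (i) If |S| = C(n−1, d) + 1, then there exists α ∈ S such that at least n − d elements β ∈ S satisfy |α △ β| = 2; that is, the subgraph of the Johnson graph J(n,d) induced on S has maximum degree at least n − d. (ii) If |S| = C(n−1, d−1) + 1, then there exists α ∈ S such that at least d elements β ∈ S satisfy |α △ β| = 2; that is, the induced subgraph has maximum degree at least d. -/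
open Matrix Polynomial

namespace Stmt15Aux

open Finset

variable {n : ℕ}

/-- Uniform sign function underlying `Wj`. -/
def sg (α β : Finset (Fin n)) : ℝ :=
  if α ⊆ β then (-1 : ℝ) ^ ((β.filter (fun y => ∃ x ∈ β \ α, y < x)).card) else 0

lemma sg_of_not_subset {α β : Finset (Fin n)} (h : ¬ α ⊆ β) : sg α β = 0 := if_neg h

lemma abs_sg (α β : Finset (Fin n)) : |sg α β| = if α ⊆ β then 1 else 0 := by
  unfold sg; split_ifs <;> simp [abs_pow]

lemma sg_mul_self (α β : Finset (Fin n)) : sg α β * sg α β = if α ⊆ β then 1 else 0 := by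
  unfold sg
  split_ifs
  · rw [← pow_add]
    exact Even.neg_one_pow ⟨_, rfl⟩
  · simp

lemma sg_single {α β : Finset (Fin n)} (hs : α ⊆ β) {y : Fin n} (h : β \ α = {y}) :
    sg α β = (-1 : ℝ) ^ ((β.filter (fun z => z < y)).card) := by
  rw [sg, if_pos hs, h]
  congr 2
  apply Finset.filter_congr
  intro z _
  simp

lemma sg_erase {γ : Finset (Fin n)} {x : Fin n} (hx : x ∈ γ) :
    sg (γ.erase x) γ = (-1 : ℝ) ^ ((γ.filter (fun z => z < x)).card) := by
  apply sg_single (Finset.erase_subset _ _)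
  rw [Finset.erase_eq, Finset.sdiff_sdiff_self_left,
    Finset.inter_eq_right.mpr (by simpa using hx)]

lemma cancel {γ σ : Finset (Fin n)} {x y : Fin n} (hx : x ∈ γ) (hy : y ∈ γ)
    (hxy : x < y) (hσ : σ ⊆ γ) (hd : γ \ σ = {x, y}) :
    sg (γ.erase x) γ * sg σ (γ.erase x) + sg (γ.erase y) γ * sg σ (γ.erase y) = 0 := by
  have hne : x ≠ y := hxy.ne
  have hxσ : x ∉ σ := by
    intro h
    have : x ∉ γ \ σ := by simp [h]
    simp [hd] at this
  have hyσ : y ∉ σ := by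
    intro h
    have : y ∉ γ \ σ := by simp [h]
    simp [hd] at this
  have hσx : σ ⊆ γ.erase x := Finset.subset_erase.mpr ⟨hσ, hxσ⟩
  have hσy : σ ⊆ γ.erase y := Finset.subset_erase.mpr ⟨hσ, hyσ⟩
  have hdx : γ.erase x \ σ = {y} := by
    rw [Finset.erase_sdiff_comm, hd]
    ext z
    simp only [Finset.mem_erase, Finset.mem_insert, Finset.mem_singleton]
    constructor
    · rintro ⟨hzx, rfl | rfl⟩
      · exact absurd rfl hzx
      · rfl
    · rintro rfl
      exact ⟨hne.symm, Or.inr rfl⟩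
  have hdy : γ.erase y \ σ = {x} := by
    rw [Finset.erase_sdiff_comm, hd]
    ext z
    simp only [Finset.mem_erase, Finset.mem_insert, Finset.mem_singleton]
    constructor
    · rintro ⟨hzy, rfl | rfl⟩
      · rfl
      · exact absurd rfl hzy
    · rintro rfl
      exact ⟨hne, Or.inl rfl⟩
  have hxq : x ∈ γ.filter (fun z => z < y) := Finset.mem_filter.mpr ⟨hx, hxy⟩
  have hq1 : 1 ≤ (γ.filter (fun z => z < y)).card := Finset.card_pos.mpr ⟨x, hxq⟩
  have e1 := sg_erase (γ := γ) hx
  have e2 : sg σ (γ.erase x) = (-1 : ℝ) ^ ((γ.filter (fun z => z < y)).card - 1) := by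
    rw [sg_single hσx hdx]
    congr 1
    rw [Finset.filter_erase, Finset.card_erase_of_mem hxq]
  have e3 := sg_erase (γ := γ) hy
  have e4 : sg σ (γ.erase y) = (-1 : ℝ) ^ ((γ.filter (fun z => z < x)).card) := by
    rw [sg_single hσy hdy]
    congr 1
    rw [Finset.filter_erase, Finset.erase_eq_of_notMem]
    simp only [Finset.mem_filter]
    rintro ⟨-, h⟩
    exact absurd (h.trans hxy) (lt_irrefl _)
  obtain ⟨m, hm⟩ : ∃ m, (γ.filter (fun z => z < y)).card = m + 1 :=
    ⟨_, (Nat.sub_add_cancel hq1).symm⟩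
  rw [e1, e2, e3, e4, hm, Nat.add_sub_cancel, pow_succ]
  ring

/-- Pointwise `∂ ∘ ∂ = 0`. -/
lemma dd (k : ℕ) (σ γ : Finset (Fin n)) (hσ : σ.card = k) (hγ : γ.card = k + 2) :
    ∑ β : {s : Finset (Fin n) // s.card = k + 1}, sg β.1 γ * sg σ β.1 = 0 := by
  by_cases hσγ : σ ⊆ γ
  · have hcd : (γ \ σ).card = 2 := by rw [Finset.card_sdiff_of_subset hσγ, hγ, hσ]; omega
    obtain ⟨x, y, hxy, hset⟩ := Finset.card_eq_two.mp hcd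
    have hxγσ : x ∈ γ \ σ := by rw [hset]; simp
    have hyγσ : y ∈ γ \ σ := by rw [hset]; simp
    have hxγ : x ∈ γ := (Finset.mem_sdiff.mp hxγσ).1
    have hyγ : y ∈ γ := (Finset.mem_sdiff.mp hyγσ).1
    have hcx : (γ.erase x).card = k + 1 := by
      rw [Finset.card_erase_of_mem hxγ, hγ]
      omega

    have hcy : (γ.erase y).card = k + 1 := by
      rw [Finset.card_erase_of_mem hyγ, hγ]
      omega
    have hbne : (⟨γ.erase x, hcx⟩ : {s : Finset (Fin n) // s.card = k + 1}) ≠ ⟨γ.erase y, hcy⟩ := by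
      intro h
      have h' : γ.erase x = γ.erase y := congrArg Subtype.val h
      have hx2 : x ∈ γ.erase y := Finset.mem_erase.mpr ⟨hxy, hxγ⟩
      rw [← h'] at hx2
      exact absurd hx2 (Finset.notMem_erase _ _)
    rw [Finset.sum_eq_add_of_mem (⟨γ.erase x, hcx⟩ : {s : Finset (Fin n) // s.card = k + 1})
      ⟨γ.erase y, hcy⟩ (Finset.mem_univ _) (Finset.mem_univ _) hbne ?_]
    · rcases lt_or_gt_of_ne hxy with h | h
      · exact cancel hxγ hyγ h hσγ hset
      · rw [add_comm]
        exact cancel hyγ hxγ h hσγ (by rw [hset, Finset.pair_comm])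
    · intro c _ hc
      obtain ⟨hc1, hc2⟩ := hc
      by_cases h1 : c.1 ⊆ γ
      swap
      · rw [sg_of_not_subset h1, zero_mul]
      by_cases h2 : σ ⊆ c.1
      swap
      · rw [sg_of_not_subset h2, mul_zero]
      exfalso
      have hcd1 : (γ \ c.1).card = 1 := by
        rw [Finset.card_sdiff_of_subset h1, hγ, c.2]
        omega
      obtain ⟨z, hz⟩ := Finset.card_eq_one.mp hcd1
      have hzin : z ∈ γ \ c.1 := hz ▸ Finset.mem_singleton_self z
      rw [Finset.mem_sdiff] at hzin
      have hzγσ : z ∈ γ \ σ := Finset.mem_sdiff.mpr ⟨hzin.1, fun hzσ => hzin.2 (h2 hzσ)⟩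
      have hc : c.1 = γ.erase z := by
        have h3 : c.1 = γ \ (γ \ c.1) := by
          rw [Finset.sdiff_sdiff_self_left, Finset.inter_eq_right.mpr h1]
        rw [h3, hz, ← Finset.erase_eq]
      rw [hset, Finset.mem_insert, Finset.mem_singleton] at hzγσ
      rcases hzγσ with rfl | rfl
      · exact hc1 (Subtype.ext hc)
      · exact hc2 (Subtype.ext hc)
  · apply Finset.sum_eq_zero
    intro c _
    by_cases h1 : c.1 ⊆ γ
    · by_cases h2 : σ ⊆ c.1
      · exact absurd (h2.trans h1) hσγ
      · rw [sg_of_not_subset h2, mul_zero]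
    · rw [sg_of_not_subset h1, zero_mul]

end Stmt15Aux

namespace Stmt15Aux

open Finset Matrix Module

lemma card_contains_zero (n k : ℕ) [NeZero n] :
    ((Finset.univ : Finset {s : Finset (Fin n) // s.card = k + 1}).filter
      (fun β => (0 : Fin n) ∈ β.1)).card = (n - 1).choose k := by
  have h1 : ((Finset.univ : Finset (Fin n)).erase 0).card = n - 1 := by
    rw [Finset.card_erase_of_mem (Finset.mem_univ _), Finset.card_univ, Fintype.card_fin]
  rw [← h1, ← Finset.card_powersetCard]
  apply Finset.card_bij (fun β _ => β.1.erase 0)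
  · intro β hβ
    have h0β : (0 : Fin n) ∈ β.1 := (Finset.mem_filter.mp hβ).2
    rw [Finset.mem_powersetCard]
    exact ⟨Finset.erase_subset_erase _ (Finset.subset_univ _),
      by rw [Finset.card_erase_of_mem h0β, β.2, Nat.add_sub_cancel]⟩
  · intro a ha b hb h
    have h0a : (0 : Fin n) ∈ a.1 := (Finset.mem_filter.mp ha).2
    have h0b : (0 : Fin n) ∈ b.1 := (Finset.mem_filter.mp hb).2
    apply Subtype.ext
    rw [← Finset.insert_erase h0a, ← Finset.insert_erase h0b, h]
  · intro τ hτ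
    rw [Finset.mem_powersetCard] at hτ
    have h0τ : (0 : Fin n) ∉ τ := fun h => (Finset.mem_erase.mp (hτ.1 h)).1 rfl
    refine ⟨⟨insert 0 τ, by rw [Finset.card_insert_of_notMem h0τ, hτ.2]⟩, ?_, ?_⟩
    · exact Finset.mem_filter.mpr ⟨Finset.mem_univ _, Finset.mem_insert_self _ _⟩
    · simp [Finset.erase_insert h0τ]

lemma wj_apply {n : ℕ} (k : ℕ) (α : {s : Finset (Fin n) // s.card = k})
    (β : {s : Finset (Fin n) // s.card = k + 1}) : Wj n k α β = sg α.1 β.1 := rfl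

lemma rank_wj_le (n k : ℕ) (hn : 0 < n) : (Wj n k).rank ≤ (n - 1).choose k := by
  haveI : NeZero n := ⟨hn.ne'⟩
  classical
  set W := Wj n k with hW
  set B : Finset {s : Finset (Fin n) // s.card = k + 1} :=
    Finset.univ.filter (fun β => (0 : Fin n) ∈ β.1) with hB
  have key : ∀ β, Wᵀ β ∈ Submodule.span ℝ ((B.image fun b => Wᵀ b : Finset _) : Set _) := by
    intro β
    by_cases h0 : (0 : Fin n) ∈ β.1
    · exact Submodule.subset_span (Finset.mem_coe.mpr (Finset.mem_image_of_mem _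
        (Finset.mem_filter.mpr ⟨Finset.mem_univ _, h0⟩)))
    · set γ := insert (0 : Fin n) β.1 with hγ
      have hγc : γ.card = k + 2 := by
        rw [hγ, Finset.card_insert_of_notMem h0, β.2]
      have hsum : ∑ b : {s : Finset (Fin n) // s.card = k + 1}, sg b.1 γ • (Wᵀ b) = 0 := by
        ext σ
        rw [Finset.sum_apply]
        simp only [Pi.smul_apply, smul_eq_mul, Pi.zero_apply, Matrix.transpose_apply,
          hW, wj_apply]
        exact dd k σ.1 γ σ.2 hγc
      have hβγ : β.1 ⊆ γ := Finset.subset_insert _ _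
      have hsg : sg β.1 γ = 1 := by
        rw [sg, if_pos hβγ, Finset.insert_sdiff_cancel h0]
        have hemp : γ.filter (fun y => ∃ x ∈ ({(0 : Fin n)} : Finset (Fin n)), y < x) = ∅ := by
          apply Finset.filter_false_of_mem
          intro z _
          simp
        rw [hemp]
        simp
      have hkey := Finset.add_sum_erase Finset.univ
        (fun b : {s : Finset (Fin n) // s.card = k + 1} => sg b.1 γ • (Wᵀ b)) (Finset.mem_univ β)
      simp only [hsum, hsg, one_smul] at hkey
      rw [eq_neg_of_add_eq_zero_left hkey]
      apply Submodule.neg_mem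
      apply Submodule.sum_mem
      intro b hb
      by_cases hzb : sg b.1 γ = 0
      · rw [hzb, zero_smul]
        exact Submodule.zero_mem _
      apply Submodule.smul_mem
      apply Submodule.subset_span
      have hbγ : b.1 ⊆ γ := by
        by_contra h
        exact hzb (sg_of_not_subset h)
      have h0b : (0 : Fin n) ∈ b.1 := by
        by_contra h0b
        have hsub : b.1 ⊆ β.1 := by
          intro z hz
          rcases Finset.mem_insert.mp (hbγ hz) with rfl | h
          · exact absurd hz h0b
          · exact h
        have heq : b.1 = β.1 := Finset.eq_of_subset_of_card_le hsub (by rw [b.2, β.2])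
        exact (Finset.ne_of_mem_erase hb) (Subtype.ext heq)
      exact Finset.mem_coe.mpr (Finset.mem_image_of_mem _
        (Finset.mem_filter.mpr ⟨Finset.mem_univ _, h0b⟩))
  rw [Matrix.rank, Matrix.range_mulVecLin]
  have hle : Submodule.span ℝ (Set.range Wᵀ) ≤
      Submodule.span ℝ ((B.image fun b => Wᵀ b : Finset _) : Set _) := by
    rw [Submodule.span_le]
    rintro v ⟨β, rfl⟩
    exact key β
  refine le_trans (Submodule.finrank_mono hle) ?_
  refine le_trans (finrank_span_finset_le_card (R := ℝ) _) ?_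
  exact le_trans Finset.card_image_le (le_of_eq (card_contains_zero n k))

end Stmt15Aux

namespace Stmt15Aux

open Finset Matrix Module

lemma card_supersets {n d : ℕ} (α : Finset (Fin n)) (hα : α.card = d) :
    ((Finset.univ : Finset {s : Finset (Fin n) // s.card = d + 1}).filter
      (fun γ => α ⊆ γ.1)).card = n - d := by
  have h1 : ((Finset.univ : Finset (Fin n)) \ α).card = n - d := by
    rw [Finset.card_sdiff_of_subset (Finset.subset_univ _), Finset.card_univ, Fintype.card_fin, hα]
  rw [← h1]
  symm
  apply Finset.card_bij (fun y hy => (⟨insert y α, by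
    rw [Finset.card_insert_of_notMem (by simpa using hy), hα]⟩ :
      {s : Finset (Fin n) // s.card = d + 1}))
  · intro y hy
    exact Finset.mem_filter.mpr ⟨Finset.mem_univ _, Finset.subset_insert _ _⟩
  · intro a ha b hb h
    have h' : insert a α = insert b α := congrArg Subtype.val h
    have : a ∈ insert b α := h' ▸ Finset.mem_insert_self a α
    rcases Finset.mem_insert.mp this with h'' | h''
    · exact h''
    · exact absurd h'' (by simpa using ha)
  · intro γ hγ
    have hsub : α ⊆ γ.1 := (Finset.mem_filter.mp hγ).2
    have hcd : (γ.1 \ α).card = 1 := by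
      rw [Finset.card_sdiff_of_subset hsub, γ.2, hα]
      omega
    obtain ⟨y, hy⟩ := Finset.card_eq_one.mp hcd
    have hyin : y ∈ γ.1 \ α := hy ▸ Finset.mem_singleton_self y
    rw [Finset.mem_sdiff] at hyin
    refine ⟨y, by simpa using hyin.2, ?_⟩
    apply Subtype.ext
    apply Finset.eq_of_subset_of_card_le
    · exact Finset.insert_subset hyin.1 hsub
    · rw [γ.2, Finset.card_insert_of_notMem hyin.2, hα]
  
lemma card_subsets {n e : ℕ} (β : Finset (Fin n)) (hβ : β.card = e + 1) :
    ((Finset.univ : Finset {s : Finset (Fin n) // s.card = e}).filter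
      (fun τ => τ.1 ⊆ β)).card = e + 1 := by
  rw [← hβ]
  symm
  apply Finset.card_bij (fun y hy => (⟨β.erase y, by
    rw [Finset.card_erase_of_mem hy, hβ, Nat.add_sub_cancel]⟩ :
      {s : Finset (Fin n) // s.card = e}))
  · intro y hy
    exact Finset.mem_filter.mpr ⟨Finset.mem_univ _, Finset.erase_subset _ _⟩
  · intro a ha b hb h
    have h' : β.erase a = β.erase b := congrArg Subtype.val h
    by_contra hab
    have : a ∈ β.erase b := Finset.mem_erase.mpr ⟨hab, ha⟩
    rw [← h'] at this
    exact absurd this (Finset.notMem_erase _ _)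
  · intro τ hτ
    have hsub : τ.1 ⊆ β := (Finset.mem_filter.mp hτ).2
    have hcd : (β \ τ.1).card = 1 := by
      rw [Finset.card_sdiff_of_subset hsub, hβ, τ.2]
      omega
    obtain ⟨y, hy⟩ := Finset.card_eq_one.mp hcd
    have hyin : y ∈ β \ τ.1 := hy ▸ Finset.mem_singleton_self y
    rw [Finset.mem_sdiff] at hyin
    refine ⟨y, hyin.1, ?_⟩
    apply Subtype.ext
    symm
    apply Finset.eq_of_subset_of_card_le
    · exact Finset.subset_erase.mpr ⟨hsub, hyin.2⟩
    · rw [Finset.card_erase_of_mem hyin.1, hβ, τ.2, Nat.add_sub_cancel]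

lemma symmDiff_card {n d : ℕ} {α β : Finset (Fin n)} (hα : α.card = d) (hβ : β.card = d) :
    (symmDiff α β).card = 2 * (β \ α).card := by
  rw [symmDiff_def]
  have : (α \ β ⊔ β \ α : Finset (Fin n)) = (α \ β) ∪ (β \ α) := rfl
  rw [this, Finset.card_union_of_disjoint (disjoint_sdiff_sdiff),
    Finset.card_sdiff_comm (hα.trans hβ.symm)]
  ring

lemma card_common_supersets_le {n d : ℕ} {α β : Finset (Fin n)} (hα : α.card = d)
    (hβ : β.card = d) (hne : α ≠ β) :
    ((Finset.univ : Finset {s : Finset (Fin n) // s.card = d + 1}).filter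
        (fun γ => α ⊆ γ.1 ∧ β ⊆ γ.1)).card
      ≤ if (symmDiff α β).card = 2 then 1 else 0 := by
  have hsd := symmDiff_card hα hβ
  have hβα : 1 ≤ (β \ α).card := by
    rcases Nat.eq_zero_or_pos (β \ α).card with h | h
    · exfalso
      apply hne
      have hsub : β ⊆ α := by
        rwa [← Finset.sdiff_eq_empty_iff_subset, ← Finset.card_eq_zero]
      exact (Finset.eq_of_subset_of_card_le hsub (le_of_eq (hα.trans hβ.symm))).symm
    · exact h
  have hcu : (α ∪ β).card = d + (β \ α).card := by
    rw [← Finset.union_sdiff_self_eq_union,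
      Finset.card_union_of_disjoint Finset.disjoint_sdiff, hα]
  by_cases h2 : (symmDiff α β).card = 2
  · rw [if_pos h2]
    apply Finset.card_le_one.mpr
    intro γ1 hγ1 γ2 hγ2
    have hba : (β \ α).card = 1 := by omega
    have hcu1 : (α ∪ β).card = d + 1 := by omega
    have key : ∀ γ : {s : Finset (Fin n) // s.card = d + 1},
        γ ∈ (Finset.univ).filter (fun γ => α ⊆ γ.1 ∧ β ⊆ γ.1) → γ.1 = α ∪ β := by
      intro γ hγ
      obtain ⟨-, h1, h2'⟩ := Finset.mem_filter.mp hγ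
      exact ((Finset.eq_of_subset_of_card_le (Finset.union_subset h1 h2')
        (by rw [γ.2, hcu1])).symm)
    exact Subtype.ext ((key γ1 hγ1).trans (key γ2 hγ2).symm)
  · rw [if_neg h2, Nat.le_zero, Finset.card_eq_zero, Finset.eq_empty_iff_forall_notMem]
    intro γ hγ
    obtain ⟨-, h1, h2'⟩ := Finset.mem_filter.mp hγ
    have hle : (α ∪ β).card ≤ d + 1 := by
      rw [← γ.2]
      exact Finset.card_le_card (Finset.union_subset h1 h2')
    have : (β \ α).card = 1 := by omega
    omega

lemma card_common_subsets_le {n e : ℕ} {α β : Finset (Fin n)} (hα : α.card = e + 1)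
    (hβ : β.card = e + 1) (hne : α ≠ β) :
    ((Finset.univ : Finset {s : Finset (Fin n) // s.card = e}).filter
        (fun τ => τ.1 ⊆ α ∧ τ.1 ⊆ β)).card
      ≤ if (symmDiff α β).card = 2 then 1 else 0 := by
  have hsd := symmDiff_card hα hβ
  have hβα : 1 ≤ (β \ α).card := by
    rcases Nat.eq_zero_or_pos (β \ α).card with h | h
    · exfalso
      apply hne
      have hsub : β ⊆ α := by
        rwa [← Finset.sdiff_eq_empty_iff_subset, ← Finset.card_eq_zero]
      exact (Finset.eq_of_subset_of_card_le hsub (le_of_eq (hα.trans hβ.symm))).symm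
    · exact h
  have hint : (α ∩ β).card + (β \ α).card = e + 1 := by
    rw [Finset.inter_comm]
    rw [← hβ]
    exact Finset.card_inter_add_card_sdiff β α
  by_cases h2 : (symmDiff α β).card = 2
  · rw [if_pos h2]
    apply Finset.card_le_one.mpr
    intro τ1 hτ1 τ2 hτ2
    have hba : (β \ α).card = 1 := by omega
    have hce : (α ∩ β).card = e := by omega
    have key : ∀ τ : {s : Finset (Fin n) // s.card = e},
        τ ∈ (Finset.univ).filter (fun τ => τ.1 ⊆ α ∧ τ.1 ⊆ β) → τ.1 = α ∩ β := by
      intro τ hτ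
      obtain ⟨-, h1, h2'⟩ := Finset.mem_filter.mp hτ
      exact Finset.eq_of_subset_of_card_le (Finset.subset_inter h1 h2') (by rw [τ.2, hce])
    exact Subtype.ext ((key τ1 hτ1).trans (key τ2 hτ2).symm)
  · rw [if_neg h2, Nat.le_zero, Finset.card_eq_zero, Finset.eq_empty_iff_forall_notMem]
    intro τ hτ
    obtain ⟨-, h1, h2'⟩ := Finset.mem_filter.mp hτ
    have hle : τ.1.card ≤ (α ∩ β).card := Finset.card_le_card (Finset.subset_inter h1 h2')
    rw [τ.2] at hle
    omega

lemma exists_ker {ι κ : Type*} [Fintype ι] [Fintype κ] [DecidableEq ι] (M : Matrix κ ι ℝ)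
    (h : M.rank < Fintype.card ι) : ∃ x : ι → ℝ, x ≠ 0 ∧ M.mulVec x = 0 := by
  have hk : LinearMap.ker M.mulVecLin ≠ ⊥ := by
    intro hbot
    have h2 := LinearMap.finrank_range_add_finrank_ker M.mulVecLin
    rw [hbot, finrank_bot, add_zero, Module.finrank_pi] at h2
    rw [Matrix.rank, h2] at h
    exact lt_irrefl _ h
  obtain ⟨x, hx, hx0⟩ := Submodule.exists_mem_ne_zero_of_ne_bot hk
  exact ⟨x, hx0, hx⟩

lemma deg_bound {V : Type*} [Fintype V] [DecidableEq V] (S : Finset V)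
    (p : V → V → Prop) [DecidableRel p] (M : Matrix ↥S ↥S ℝ) (c : ℕ) (x : ↥S → ℝ)
    (hx : x ≠ 0) (hMx : M.mulVec x = 0) (hdiag : ∀ a, M a a = (c : ℝ))
    (hoff : ∀ a b : ↥S, a ≠ b → |M a b| ≤ if p a.1 b.1 then 1 else 0) :
    ∃ α ∈ S, c ≤ (S.filter (fun β => p α β)).card := by
  haveI hne : Nonempty ↥S := by
    by_contra h
    exact hx (funext fun a => absurd ⟨a⟩ h)
  obtain ⟨a, -, hmax⟩ := Finset.exists_max_image (Finset.univ : Finset ↥S)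
    (fun b => |x b|) Finset.univ_nonempty
  have h0 : 0 < |x a| := by
    rcases (abs_nonneg (x a)).lt_or_eq with h | h
    · exact h
    · exfalso
      apply hx
      funext b
      have hb := hmax b (Finset.mem_univ b)
      rw [← h] at hb
      exact abs_nonpos_iff.mp hb
  have heq : M a a * x a + ∑ b ∈ Finset.univ.erase a, M a b * x b = 0 := by
    have h1 := congrFun hMx a
    rw [Matrix.mulVec, dotProduct] at h1
    rw [Finset.add_sum_erase Finset.univ (fun b => M a b * x b) (Finset.mem_univ a)]
    simpa using h1
  set N := (S.filter (fun β => p a.1 β)).card with hN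
  have hNle : ((Finset.univ.erase a).filter (fun b : ↥S => p a.1 b.1)).card ≤ N := by
    apply Finset.card_le_card_of_injOn Subtype.val
    · intro b hb
      exact Finset.mem_filter.mpr ⟨b.2, (Finset.mem_filter.mp hb).2⟩
    · exact fun u _ v _ h => Subtype.ext h
  have hub : (c : ℝ) * |x a| ≤ (N : ℝ) * |x a| := by
    have h2 : (c : ℝ) * |x a| = |M a a * x a| := by
      rw [abs_mul, hdiag a, Nat.abs_cast]
    rw [h2, show M a a * x a = - ∑ b ∈ Finset.univ.erase a, M a b * x b by linarith [heq],
      abs_neg]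
    calc |∑ b ∈ Finset.univ.erase a, M a b * x b|
        ≤ ∑ b ∈ Finset.univ.erase a, |M a b * x b| := Finset.abs_sum_le_sum_abs _ _
      _ ≤ ∑ b ∈ Finset.univ.erase a, (if p a.1 b.1 then |x b| else 0) := by
          apply Finset.sum_le_sum
          intro b hb
          rw [abs_mul]
          refine le_trans (mul_le_mul_of_nonneg_right
            (hoff a b (Finset.ne_of_mem_erase hb).symm) (abs_nonneg _)) ?_
          split_ifs <;> simp
      _ = ∑ b ∈ (Finset.univ.erase a).filter (fun b => p a.1 b.1), |x b| := by
          rw [Finset.sum_filter]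
      _ ≤ ∑ _b ∈ (Finset.univ.erase a).filter (fun b => p a.1 b.1), |x a| :=
          Finset.sum_le_sum (fun b _ => hmax b (Finset.mem_univ b))
      _ = (((Finset.univ.erase a).filter (fun b : ↥S => p a.1 b.1)).card : ℝ) * |x a| := by
          rw [Finset.sum_const, nsmul_eq_mul]
      _ ≤ (N : ℝ) * |x a| := by
          apply mul_le_mul_of_nonneg_right _ (abs_nonneg _)
          exact_mod_cast hNle
  refine ⟨a.1, a.2, ?_⟩
  rw [← hN]
  exact_mod_cast le_of_mul_le_mul_right hub h0

end Stmt15Aux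

open Stmt15Aux

/-- Let `n, d ≥ 1` with `n ≥ 2d`, and let `S` be a set of `d`-subsets of
an `n`-set (i.e. of vertices of the Johnson graph `J(n,d)`).
(i) If `|S| = C(n−1,d) + 1` then some `α ∈ S` has at least `n − d` neighbours in `S`
(the induced subgraph has maximum degree `≥ n − d`).
(ii) If `|S| = C(n−1,d−1) + 1` then some `α ∈ S` has at least `d` neighbours in `S`. -/
theorem stmt_15 (n d : ℕ) (hd : 1 ≤ d) (hn : 2 * d ≤ n)
    (S : Finset {s : Finset (Fin n) // s.card = d}) :
    (S.card = (n - 1).choose d + 1 →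
      ∃ α ∈ S, n - d ≤ (S.filter (fun β => (symmDiff α.1 β.1).card = 2)).card) ∧
    (S.card = (n - 1).choose (d - 1) + 1 →
      ∃ α ∈ S, d ≤ (S.filter (fun β => (symmDiff α.1 β.1).card = 2)).card) := by
  classical
  obtain ⟨e, rfl⟩ : ∃ e, d = e + 1 := ⟨d - 1, by omega⟩
  have hn0 : 0 < n := by omega
  constructor
  · -- part (i)
    intro hScard
    set W := Wj n (e + 1) with hWdef
    set W' : Matrix ↥S {s : Finset (Fin n) // s.card = (e + 1) + 1} ℝ :=
      Matrix.of (fun a γ => W a.1 γ) with hW'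
    have hW'eq : W' = (1 : Matrix {s : Finset (Fin n) // s.card = (e + 1)}
        {s : Finset (Fin n) // s.card = (e + 1)} ℝ).submatrix (fun a : ↥S => a.1) id * W := by
      ext a γ
      simp [hW', Matrix.mul_apply, Matrix.submatrix_apply, Matrix.one_apply,
        ite_mul, one_mul, zero_mul, Finset.sum_ite_eq]
    have hrank : (W'ᵀ).rank < Fintype.card ↥S := by
      rw [Matrix.rank_transpose, hW'eq, Fintype.card_coe, hScard]
      exact Nat.lt_succ_of_le (le_trans (Matrix.rank_mul_le_right _ _) (rank_wj_le n (e + 1) hn0))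
    obtain ⟨x, hx0, hxker⟩ := exists_ker (W'ᵀ) hrank
    set M := W' * W'ᵀ with hM
    have hMx : M.mulVec x = 0 := by
      rw [hM, ← Matrix.mulVec_mulVec, hxker, Matrix.mulVec_zero]
    have hMentry : ∀ a b : ↥S, M a b =
        ∑ γ : {s : Finset (Fin n) // s.card = (e + 1) + 1}, sg a.1.1 γ.1 * sg b.1.1 γ.1 := by
      intro a b
      rw [hM, Matrix.mul_apply]
      rfl
    have hdiag : ∀ a : ↥S, M a a = ((n - (e + 1) : ℕ) : ℝ) := by
      intro a
      rw [hMentry, Finset.sum_congr rfl (fun γ _ => sg_mul_self a.1.1 γ.1),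
        Finset.sum_boole, card_supersets a.1.1 a.1.2]
    have hoff : ∀ a b : ↥S, a ≠ b →
        |M a b| ≤ if (symmDiff a.1.1 b.1.1).card = 2 then 1 else 0 := by
      intro a b hab
      have hne : a.1.1 ≠ b.1.1 := fun h => hab (Subtype.ext (Subtype.ext h))
      rw [hMentry]
      refine le_trans (Finset.abs_sum_le_sum_abs _ _) ?_
      have h1 : ∀ γ ∈ (Finset.univ : Finset {s : Finset (Fin n) // s.card = (e + 1) + 1}),
          |sg a.1.1 γ.1 * sg b.1.1 γ.1| =
            if a.1.1 ⊆ γ.1 ∧ b.1.1 ⊆ γ.1 then (1 : ℝ) else 0 := by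
        intro γ _
        rw [abs_mul, abs_sg, abs_sg]
        by_cases h1 : a.1.1 ⊆ γ.1 <;> by_cases h2 : b.1.1 ⊆ γ.1 <;> simp [h1, h2]
      rw [Finset.sum_congr rfl h1, Finset.sum_boole]
      have hcount := card_common_supersets_le a.1.2 b.1.2 hne
      by_cases h2 : (symmDiff a.1.1 b.1.1).card = 2
      · rw [if_pos h2]
        rw [if_pos h2] at hcount
        exact_mod_cast hcount
      · rw [if_neg h2]
        rw [if_neg h2] at hcount
        exact_mod_cast hcount
    exact deg_bound S (fun α β => (symmDiff α.1 β.1).card = 2) M (n - (e + 1)) x hx0 hMx hdiag hoff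
  · -- part (ii)
    intro hScard
    rw [Nat.add_sub_cancel] at hScard
    set W := Wj n e with hWdef
    set W' : Matrix {s : Finset (Fin n) // s.card = e} ↥S ℝ :=
      Matrix.of (fun τ a => W τ a.1) with hW'
    have hW'eq : W' = W * (1 : Matrix {s : Finset (Fin n) // s.card = e + 1}
        {s : Finset (Fin n) // s.card = e + 1} ℝ).submatrix id (fun a : ↥S => a.1) := by
      ext τ a
      simp [hW', Matrix.mul_apply, Matrix.submatrix_apply, Matrix.one_apply,
        mul_ite, mul_one, mul_zero, Finset.sum_ite_eq']
    have hrank : W'.rank < Fintype.card ↥S := by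
      rw [hW'eq, Fintype.card_coe, hScard]
      exact Nat.lt_succ_of_le (le_trans (Matrix.rank_mul_le_left _ _) (rank_wj_le n e hn0))
    obtain ⟨x, hx0, hxker⟩ := exists_ker W' hrank
    set M := W'ᵀ * W' with hM
    have hMx : M.mulVec x = 0 := by
      rw [hM, ← Matrix.mulVec_mulVec, hxker, Matrix.mulVec_zero]
    have hMentry : ∀ a b : ↥S, M a b =
        ∑ τ : {s : Finset (Fin n) // s.card = e}, sg τ.1 a.1.1 * sg τ.1 b.1.1 := by
      intro a b
      rw [hM, Matrix.mul_apply]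
      rfl
    have hdiag : ∀ a : ↥S, M a a = ((e + 1 : ℕ) : ℝ) := by
      intro a
      rw [hMentry, Finset.sum_congr rfl (fun τ _ => sg_mul_self τ.1 a.1.1),
        Finset.sum_boole, card_subsets a.1.1 a.1.2]
    have hoff : ∀ a b : ↥S, a ≠ b →
        |M a b| ≤ if (symmDiff a.1.1 b.1.1).card = 2 then 1 else 0 := by
      intro a b hab
      have hne : a.1.1 ≠ b.1.1 := fun h => hab (Subtype.ext (Subtype.ext h))
      rw [hMentry]
      refine le_trans (Finset.abs_sum_le_sum_abs _ _) ?_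
      have h1 : ∀ τ ∈ (Finset.univ : Finset {s : Finset (Fin n) // s.card = e}),
          |sg τ.1 a.1.1 * sg τ.1 b.1.1| =
            if τ.1 ⊆ a.1.1 ∧ τ.1 ⊆ b.1.1 then (1 : ℝ) else 0 := by
        intro τ _
        rw [abs_mul, abs_sg, abs_sg]
        by_cases h1 : τ.1 ⊆ a.1.1 <;> by_cases h2 : τ.1 ⊆ b.1.1 <;> simp [h1, h2]
      rw [Finset.sum_congr rfl h1, Finset.sum_boole]
      have hcount := card_common_subsets_le a.1.2 b.1.2 hne
      by_cases h2 : (symmDiff a.1.1 b.1.1).card = 2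
      · rw [if_pos h2]
        rw [if_pos h2] at hcount
        exact_mod_cast hcount
      · rw [if_neg h2]
        rw [if_neg h2] at hcount
        exact_mod_cast hcount
    exact deg_bound S (fun α β => (symmDiff α.1 β.1).card = 2) M (e + 1) x hx0 hMx hdiag hoff
end
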